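/- arXiv:1812.05580 — 3 statements merged into one kernel-verified Lean document; each statement's English description precedes it below -/
import Mathlib

section
/- For every natural number n, the number of partitions of n in which 1 appears at most once and, for every positive integer j, the total number of appearances of j and j+1 together is at most 2, equals the number of partitions of n such that, with 2j the largest repeated part, every positive even integer less than 2j appears at least twice, no odd part less than 2j appears, each odd part appears at most once, and no part greater than 2j is repeated. -/
open Multiset

namespace GA

/-- set of repeated values -/
def reps (M : Multiset ℕ) : Finset ℕ := M.toFinset.filter (fun x => 2 ≤ M.count x)

/-- number of single (multiplicity-1) parts that are `≥ x` -/
def sAbove (M : Multiset ℕ) (x : ℕ) : ℕ :=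
  (M.filter (fun s => x ≤ s ∧ M.count s = 1)).card

def hh (M : Multiset ℕ) (x : ℕ) : ℕ := 2 * x + 2 * sAbove M x

def peelG (M : Multiset ℕ) (d : ℕ) : Multiset ℕ :=
  M.filter (· < d) + (M.filter (fun x => d < x)).map (· - 2)

def unpeelG (M : Multiset ℕ) (d : ℕ) : Multiset ℕ :=
  M.filter (· < d) + Multiset.replicate 2 d + (M.filter (fun x => d ≤ x)).map (· + 2)

def unpeelA (M : Multiset ℕ) (c : ℕ) : Multiset ℕ :=
  M.map (· + 2) + Multiset.replicate (c + 2) 2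

def peelA (M : Multiset ℕ) : Multiset ℕ :=
  (M.filter (fun x => ¬ x = 2)).map (· - 2)

lemma split3 (M : Multiset ℕ) (d : ℕ) :
    M.filter (· < d) + Multiset.replicate (M.count d) d + M.filter (fun x => d < x) = M := by
  have h3 : M.filter (· < d) + M.filter (fun x => ¬ x < d) = M := M.filter_add_not _
  have h4 : (M.filter (fun x => ¬ x < d)).filter (fun x => d = x)
      + (M.filter (fun x => ¬ x < d)).filter (fun x => ¬ d = x) = M.filter (fun x => ¬ x < d) :=
    Multiset.filter_add_not _ _
  have h5 : (M.filter (fun x => ¬ x < d)).filter (fun x => d = x) = M.filter (fun x => d = x) := by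
    rw [Multiset.filter_filter]
    exact Multiset.filter_congr (fun x _ => by omega)
  have h6 : (M.filter (fun x => ¬ x < d)).filter (fun x => ¬ d = x) = M.filter (fun x => d < x) := by
    rw [Multiset.filter_filter]
    exact Multiset.filter_congr (fun x _ => by omega)
  have h7 : M.filter (fun x => d = x) = Multiset.replicate (M.count d) d := Multiset.filter_eq M d
  conv_rhs => rw [← h3, ← h4, h5, h6, h7]
  rw [add_assoc]

lemma card_parts (M : Multiset ℕ) (d : ℕ) :
    (M.filter (· < d)).card + M.count d + (M.filter (fun x => d < x)).card = M.card := by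
  have := congrArg Multiset.card (split3 M d)
  simpa using this

lemma sum_parts (M : Multiset ℕ) (d : ℕ) :
    (M.filter (· < d)).sum + M.count d * d + (M.filter (fun x => d < x)).sum = M.sum := by
  have := congrArg Multiset.sum (split3 M d)
  simpa [Multiset.sum_replicate] using this

lemma card_peelG (M : Multiset ℕ) (d : ℕ) :
    (peelG M d).card + M.count d = M.card := by
  unfold peelG
  have := card_parts M d
  simp only [Multiset.card_add, Multiset.card_map]
  omega

lemma sum_map_sub2 (N : Multiset ℕ) (h : ∀ a ∈ N, 2 ≤ a) :
    (N.map (· - 2)).sum + 2 * N.card = N.sum := by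
  induction N using Multiset.induction_on with
  | empty => simp
  | cons a s ih =>
    have ha : 2 ≤ a := h a (Multiset.mem_cons_self a s)
    have ihs := ih (fun b hb => h b (Multiset.mem_cons_of_mem hb))
    simp only [Multiset.map_cons, Multiset.sum_cons, Multiset.card_cons]
    omega

lemma sum_map_add2 (N : Multiset ℕ) :
    (N.map (· + 2)).sum = N.sum + 2 * N.card := by
  induction N using Multiset.induction_on with
  | empty => simp
  | cons a s ih =>
    simp only [Multiset.map_cons, Multiset.sum_cons, Multiset.card_cons, ih]
    ring

lemma sum_peelG (M : Multiset ℕ) (d : ℕ) (hd : 1 ≤ d) :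
    (peelG M d).sum + M.count d * d + 2 * (M.filter (fun x => d < x)).card = M.sum := by
  unfold peelG
  have h2 : ∀ a ∈ M.filter (fun x => d < x), 2 ≤ a := by
    intro a ha
    have := Multiset.of_mem_filter ha
    omega
  have := sum_map_sub2 (M.filter (fun x => d < x)) h2
  have := sum_parts M d
  simp only [Multiset.sum_add]
  omega

lemma count_peelG (M : Multiset ℕ) (d : ℕ) (hd : 1 ≤ d) (x : ℕ) :
    (peelG M d).count x
      = (if x < d then M.count x else 0) + (if d - 1 ≤ x then M.count (x + 2) else 0) := by
  unfold peelG
  rw [Multiset.count_add, Multiset.count_filter, Multiset.count_map]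
  congr 1
  by_cases hx : d - 1 ≤ x
  · rw [if_pos hx]
    have : (Multiset.filter (fun a => x = a - 2) (Multiset.filter (fun x => d < x) M))
        = Multiset.filter (fun a => x + 2 = a) M := by
      rw [Multiset.filter_filter]
      exact Multiset.filter_congr (fun a _ => by omega)
    rw [this, ← Multiset.countP_eq_card_filter]
    simp [Multiset.count]
  · rw [if_neg hx, ← Multiset.countP_eq_card_filter]
    rw [Multiset.countP_eq_zero]
    intro a ha
    have h1 := Multiset.of_mem_filter ha
    omega

lemma count_unpeelG (M : Multiset ℕ) (d : ℕ) (x : ℕ) :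
    (unpeelG M d).count x
      = (if x < d then M.count x else 0) + (if x = d then 2 else 0)
        + (if d + 2 ≤ x then M.count (x - 2) else 0) := by
  unfold unpeelG
  rw [Multiset.count_add, Multiset.count_add, Multiset.count_filter, Multiset.count_replicate,
    Multiset.count_map]
  congr 1
  · congr 1
    by_cases hx : d = x
    · simp [hx]
    · rw [if_neg hx, if_neg (fun h => hx h.symm)]
  · by_cases hx : d + 2 ≤ x
    · rw [if_pos hx]
      have : (Multiset.filter (fun a => x = a + 2) (Multiset.filter (fun x => d ≤ x) M))
          = Multiset.filter (fun a => x - 2 = a) M := by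
        rw [Multiset.filter_filter]
        exact Multiset.filter_congr (fun a _ => by omega)
      rw [this, ← Multiset.countP_eq_card_filter]
      simp [Multiset.count]
    · rw [if_neg hx, ← Multiset.countP_eq_card_filter]
      rw [Multiset.countP_eq_zero]
      intro a ha
      have h1 := Multiset.of_mem_filter ha
      omega

lemma card_unpeelG (M : Multiset ℕ) (d : ℕ) :
    (unpeelG M d).card = (M.filter (· < d)).card + (M.filter (fun x => d ≤ x)).card + 2 := by
  unfold unpeelG
  simp only [Multiset.card_add, Multiset.card_map, Multiset.card_replicate]
  ring

lemma card_filter_le_split (M : Multiset ℕ) (d : ℕ) :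
    (M.filter (· < d)).card + (M.filter (fun x => d ≤ x)).card = M.card := by
  have h3 := congrArg Multiset.card (M.filter_add_not (· < d))
  simp only [Multiset.card_add] at h3
  have : M.filter (fun x => ¬ x < d) = M.filter (fun x => d ≤ x) :=
    Multiset.filter_congr (fun a _ => by omega)
  rw [this] at h3
  exact h3

lemma sum_unpeelG (M : Multiset ℕ) (d : ℕ) :
    (unpeelG M d).sum = M.sum + 2 * d + 2 * (M.filter (fun x => d ≤ x)).card := by
  unfold unpeelG
  have h1 := sum_map_add2 (M.filter (fun x => d ≤ x))
  have h2 := congrArg Multiset.sum (M.filter_add_not (· < d))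
  have h3 : M.filter (fun x => ¬ x < d) = M.filter (fun x => d ≤ x) :=
    Multiset.filter_congr (fun a _ => by omega)
  rw [h3] at h2
  simp only [Multiset.sum_add] at h2 ⊢
  rw [h1, Multiset.sum_replicate]
  simp only [smul_eq_mul]
  omega

lemma count_unpeelA (M : Multiset ℕ) (c : ℕ) (hM : M.count 0 = 0) (x : ℕ) :
    (unpeelA M c).count x
      = (if x = 2 then c + 2 else 0) + (if 2 ≤ x then M.count (x - 2) else 0) := by
  unfold unpeelA
  rw [Multiset.count_add]
  have hrep : (Multiset.replicate (c + 2) 2).count x = if x = 2 then c + 2 else 0 := by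
    rw [Multiset.count_replicate]
    by_cases hx : x = 2
    · simp [hx]
    · rw [if_neg (fun h => hx h.symm), if_neg hx]
  have hmap : (M.map (· + 2)).count x = if 2 ≤ x then M.count (x - 2) else 0 := by
    rw [Multiset.count_map]
    by_cases hx : 2 ≤ x
    · rw [if_pos hx]
      by_cases hx2 : x = 2
      · subst hx2
        rw [← Multiset.countP_eq_card_filter, Multiset.countP_eq_zero.2]
        · simp [hM]
        · intro a ha
          have : 0 < M.count a := Multiset.count_pos.2 ha
          have ha0 : a ≠ 0 := fun h => by simp [h, hM] at this
          omega
      · have : (Multiset.filter (fun a => x = a + 2) M) = Multiset.filter (fun a => x - 2 = a) M :=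
          Multiset.filter_congr (fun a _ => by omega)
        rw [this, ← Multiset.countP_eq_card_filter]
        simp [Multiset.count]
    · rw [if_neg hx, ← Multiset.countP_eq_card_filter, Multiset.countP_eq_zero.2]
      intro a ha
      omega
  rw [hrep, hmap, add_comm]

lemma card_unpeelA (M : Multiset ℕ) (c : ℕ) :
    (unpeelA M c).card = M.card + c + 2 := by
  unfold unpeelA
  simp only [Multiset.card_add, Multiset.card_map, Multiset.card_replicate]
  ring

lemma sum_unpeelA (M : Multiset ℕ) (c : ℕ) :
    (unpeelA M c).sum = M.sum + 2 * M.card + 2 * c + 4 := by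
  unfold unpeelA
  simp only [Multiset.sum_add, sum_map_add2, Multiset.sum_replicate, smul_eq_mul]
  ring

lemma count_peelA (M : Multiset ℕ) (h0 : M.count 0 = 0) (h1 : M.count 1 = 0) (x : ℕ) :
    (peelA M).count x = if 1 ≤ x then M.count (x + 2) else 0 := by
  unfold peelA
  rw [Multiset.count_map]
  by_cases hx : 1 ≤ x
  · rw [if_pos hx]
    have : (Multiset.filter (fun a => x = a - 2) (Multiset.filter (fun x => ¬ x = 2) M))
        = Multiset.filter (fun a => x + 2 = a) M := by
      rw [Multiset.filter_filter]
      apply Multiset.filter_congr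
      intro a ha
      have : 0 < M.count a := Multiset.count_pos.2 ha
      have ha2 : a ≠ 0 := fun h => by simp [h, h0] at this
      have ha3 : a ≠ 1 := fun h => by simp [h, h1] at this
      omega
    rw [this, ← Multiset.countP_eq_card_filter]
    simp [Multiset.count]
  · rw [if_neg hx, ← Multiset.countP_eq_card_filter, Multiset.countP_eq_zero.2]
    intro a ha
    have hm := Multiset.mem_filter.1 ha
    have : 0 < M.count a := Multiset.count_pos.2 hm.1
    have ha2 : a ≠ 0 := fun h => by simp [h, h0] at this
    have ha3 : a ≠ 1 := fun h => by simp [h, h1] at this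
    omega

lemma card_peelA (M : Multiset ℕ) :
    (peelA M).card + M.count 2 = M.card := by
  unfold peelA
  have h3 := congrArg Multiset.card (M.filter_add_not (fun x => x = 2))
  simp only [Multiset.card_add] at h3
  have h4 : M.filter (fun x => x = 2) = Multiset.replicate (M.count 2) 2 := Multiset.filter_eq' M 2
  rw [h4] at h3
  simp only [Multiset.card_replicate, Multiset.card_map] at h3 ⊢
  omega

lemma sum_peelA (M : Multiset ℕ) (h0 : M.count 0 = 0) (h1 : M.count 1 = 0) :
    (peelA M).sum + 2 * M.count 2 + 2 * (peelA M).card = M.sum := by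
  unfold peelA
  have h2 : ∀ a ∈ M.filter (fun x => ¬ x = 2), 2 ≤ a := by
    intro a ha
    have hm := Multiset.mem_filter.1 ha
    have : 0 < M.count a := Multiset.count_pos.2 hm.1
    have ha2 : a ≠ 0 := fun h => by simp [h, h0] at this
    have ha3 : a ≠ 1 := fun h => by simp [h, h1] at this
    omega
  have hs := sum_map_sub2 _ h2
  have h3 := congrArg Multiset.sum (M.filter_add_not (fun x => x = 2))
  have h4 : M.filter (fun x => x = 2) = Multiset.replicate (M.count 2) 2 := Multiset.filter_eq' M 2
  rw [h4] at h3
  simp only [Multiset.sum_add, Multiset.sum_replicate, smul_eq_mul] at h3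
  simp only [Multiset.card_map]
  omega

/-- largest repeated part -/
def lrp (M : Multiset ℕ) : ℕ := (reps M).sup id

def IsG (M : Multiset ℕ) : Prop :=
  M.count 1 ≤ 1 ∧ ∀ j, 1 ≤ j → M.count j + M.count (j + 1) ≤ 2

def StrA (M : Multiset ℕ) (j : ℕ) : Prop :=
  (∀ k, 1 ≤ k → k ≤ j → 2 ≤ M.count (2 * k)) ∧ (∀ x, 2 * j < x → M.count x ≤ 1)
  ∧ (∀ x, x < 2 * j → ¬ 2 ∣ x → M.count x = 0) ∧ M.count 0 = 0

def kappa (M : Multiset ℕ) : ℕ :=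
  if h : (reps M).Nonempty then (reps M).max' h + sAbove M ((reps M).max' h + 1) else M.card

lemma mem_reps {M : Multiset ℕ} {x : ℕ} : x ∈ reps M ↔ 2 ≤ M.count x := by
  unfold reps
  rw [Finset.mem_filter, Multiset.mem_toFinset]
  constructor
  · exact fun h => h.2
  · intro h
    exact ⟨Multiset.count_pos.1 (by omega), h⟩

lemma card_peelG_lt {M : Multiset ℕ} (h : (reps M).Nonempty) :
    (peelG M ((reps M).max' h)).card < M.card := by
  have h2 : 2 ≤ M.count ((reps M).max' h) := mem_reps.1 ((reps M).max'_mem h)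
  have := card_peelG M ((reps M).max' h)
  omega

lemma card_peelA_lt {M : Multiset ℕ} (h : 2 ≤ M.count 2) : (peelA M).card < M.card := by
  have := card_peelA M
  omega

def f (M : Multiset ℕ) : Multiset ℕ :=
  if h : (reps M).Nonempty then
    let τ := f (peelG M ((reps M).max' h))
    unpeelA τ ((M.sum - τ.sum - 2 * τ.card - 4) / 2)
  else M
termination_by M.card
decreasing_by exact card_peelG_lt h

lemma hh_exists (N : Multiset ℕ) (Δ : ℕ) : ∃ x, Δ ≤ hh N x := ⟨Δ, by unfold hh; omega⟩

def g (M : Multiset ℕ) : Multiset ℕ :=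
  if h : 2 ≤ M.count 2 then
    let π₁ := g (peelA M)
    unpeelG π₁ (Nat.find (hh_exists π₁ (M.sum - (peelA M).sum)))
  else M
termination_by M.card
decreasing_by exact card_peelA_lt h

lemma f_pos {M : Multiset ℕ} (h : (reps M).Nonempty) :
    f M = unpeelA (f (peelG M ((reps M).max' h)))
      ((M.sum - (f (peelG M ((reps M).max' h))).sum
        - 2 * (f (peelG M ((reps M).max' h))).card - 4) / 2) := by
  rw [f]
  simp only [dif_pos h]

lemma f_neg {M : Multiset ℕ} (h : ¬ (reps M).Nonempty) : f M = M := by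
  rw [f]
  simp only [dif_neg h]

lemma g_pos {M : Multiset ℕ} (h : 2 ≤ M.count 2) :
    g M = unpeelG (g (peelA M))
      (Nat.find (hh_exists (g (peelA M)) (M.sum - (peelA M).sum))) := by
  rw [g]
  simp only [dif_pos h]

lemma g_neg {M : Multiset ℕ} (h : ¬ 2 ≤ M.count 2) : g M = M := by
  rw [g]
  simp only [dif_neg h]

/-- a multiset with multiplicities ≤ 1 and values in `[a,b]` has at most `b+1-a` elements -/
lemma L1 (N : Multiset ℕ) (a b : ℕ) (hc : ∀ x, N.count x ≤ 1)
    (hr : ∀ x ∈ N, a ≤ x ∧ x ≤ b) : N.card ≤ b + 1 - a := by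
  have hle : N ≤ (Finset.Icc a b).val := by
    rw [Multiset.le_iff_count]
    intro x
    by_cases hx : x ∈ N
    · have h1 := hr x hx
      have h2 : x ∈ Finset.Icc a b := Finset.mem_Icc.2 h1
      have h3 : (Finset.Icc a b).val.count x = 1 :=
        Multiset.count_eq_one_of_mem (Finset.Icc a b).nodup h2
      have h4 := hc x
      omega
    · have : N.count x = 0 := Multiset.count_eq_zero.2 hx
      omega
  have := Multiset.card_le_card hle
  simpa [Nat.card_Icc] using this

lemma sAbove_eq_card_filter (M : Multiset ℕ) (y : ℕ)
    (h : ∀ x, y ≤ x → M.count x ≤ 1) :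
    sAbove M y = (M.filter (fun x => y ≤ x)).card := by
  unfold sAbove
  congr 1
  apply Multiset.filter_congr
  intro x hx
  have : 0 < M.count x := Multiset.count_pos.2 hx
  constructor
  · exact fun hh => hh.1
  · intro hy
    exact ⟨hy, by have := h x hy; omega⟩

lemma sAbove_step (M : Multiset ℕ) (x : ℕ) :
    sAbove M x = (if M.count x = 1 then 1 else 0) + sAbove M (x + 1) := by
  unfold sAbove
  have hsplit : M.filter (fun s => x ≤ s ∧ M.count s = 1)
      = M.filter (fun s => x = s ∧ M.count s = 1)
        + M.filter (fun s => x + 1 ≤ s ∧ M.count s = 1) := by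
    have h1 : M.filter (fun s => x ≤ s ∧ M.count s = 1)
        = (M.filter (fun s => x ≤ s ∧ M.count s = 1)).filter (fun s => x = s)
          + (M.filter (fun s => x ≤ s ∧ M.count s = 1)).filter (fun s => ¬ x = s) :=
      (Multiset.filter_add_not _ _).symm
    rw [h1, Multiset.filter_filter, Multiset.filter_filter]
    congr 1
    · apply Multiset.filter_congr
      intro s _
      constructor
      · rintro ⟨h1, h2⟩; exact ⟨h1, h2.2⟩
      · rintro ⟨h1, h2⟩; exact ⟨h1, le_of_eq h1, h2⟩
    · apply Multiset.filter_congr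
      intro s _
      constructor
      · rintro ⟨h1, h2⟩; exact ⟨by omega, h2.2⟩
      · rintro ⟨h1, h2⟩; exact ⟨by omega, by omega, h2⟩
  rw [hsplit, Multiset.card_add]
  congr 1
  have h2 : M.filter (fun s => x = s ∧ M.count s = 1)
      = if M.count x = 1 then Multiset.replicate 1 x else 0 := by
    by_cases hx : M.count x = 1
    · rw [if_pos hx]
      have he : M.filter (fun s => x = s ∧ M.count s = 1) = M.filter (fun s => x = s) := by
        apply Multiset.filter_congr
        intro s _
        constructor
        · exact fun h => h.1
        · intro h; exact ⟨h, by rw [← h]; exact hx⟩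
      rw [he, Multiset.filter_eq, hx]
    · rw [if_neg hx, Multiset.filter_eq_nil.2]
      intro s _ hcon
      exact hx (by rw [hcon.1]; exact hcon.2)
  rw [h2]
  by_cases hx : M.count x = 1 <;> simp [hx]

lemma hh_mono (M : Multiset ℕ) {x y : ℕ} (h : x ≤ y) : hh M x ≤ hh M y := by
  induction y with
  | zero => simp_all
  | succ n ih =>
    rcases Nat.lt_or_ge x (n+1) with h1 | h1
    · have h2 := ih (by omega)
      have h3 := sAbove_step M n
      have hd : (if M.count n = 1 then 1 else 0) ≤ 1 := by split <;> omega
      unfold hh at *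
      omega
    · have : x = n + 1 := by omega
      simp [this]

lemma hh_step (M : Multiset ℕ) (x : ℕ) : hh M (x + 1) ≤ hh M x + 2 := by
  have := sAbove_step M x
  have hd : (if M.count x = 1 then 1 else 0) ≤ 1 := by split <;> omega
  unfold hh
  omega

set_option linter.unusedSectionVars false

section PeelG

variable {M : Multiset ℕ} {d : ℕ}
  (hG : IsG M) (h0 : M.count 0 = 0) (hd2 : 2 ≤ M.count d) (hmax : ∀ x, 2 ≤ M.count x → x ≤ d)

include hG h0 hd2 hmax

lemma dfacts : 2 ≤ d ∧ M.count d = 2 ∧ M.count (d - 1) = 0 ∧ M.count (d + 1) = 0 := by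
  have hd0 : d ≠ 0 := fun h => by rw [h] at hd2; omega
  have hd1 : d ≠ 1 := fun h => by rw [h] at hd2; have := hG.1; omega
  have h1 := hG.2 d (by omega)
  have h2 := hG.2 (d - 1) (by omega)
  have hdd : d - 1 + 1 = d := by omega
  rw [hdd] at h2
  exact ⟨by omega, by omega, by omega, by omega⟩

lemma count_peelG' (x : ℕ) :
    (peelG M d).count x
      = if x + 1 < d then M.count x else if x + 1 = d then 0 else M.count (x + 2) := by
  obtain ⟨hdge, hcd, hcm, hcp⟩ := dfacts hG h0 hd2 hmax
  rw [count_peelG M d (by omega) x]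
  by_cases h1 : x + 1 < d
  · rw [if_pos (by omega : x < d), if_neg (by omega : ¬ d - 1 ≤ x), if_pos h1]
    omega
  · by_cases h2 : x + 1 = d
    · have hx : x = d - 1 := by omega
      subst hx
      have hee : d - 1 + 2 = d + 1 := by omega
      rw [if_pos (by omega : d - 1 < d), if_pos (by omega : d - 1 ≤ d - 1), hee,
        if_neg (by omega), if_pos (by omega), hcm, hcp]
    · rw [if_neg (by omega : ¬ x < d), if_pos (by omega : d - 1 ≤ x), if_neg h1, if_neg h2]
      omega

lemma isG_peelG : IsG (peelG M d) ∧ (peelG M d).count 0 = 0 := by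
  obtain ⟨hdge, hcd, hcm, hcp⟩ := dfacts hG h0 hd2 hmax
  refine ⟨⟨?_, ?_⟩, ?_⟩
  · rw [count_peelG' hG h0 hd2 hmax 1]
    have e1 := hG.1
    have e3 : M.count 3 + M.count 4 ≤ 2 := hG.2 3 (by omega)
    split_ifs with a1 a2 <;> omega
  · intro j hj
    rw [count_peelG' hG h0 hd2 hmax j, count_peelG' hG h0 hd2 hmax (j + 1)]
    have e1 := hG.2 j hj
    have e3 : M.count (j + 2) + M.count (j + 1 + 2) ≤ 2 := hG.2 (j + 2) (by omega)
    split_ifs with a1 a2 a3 a4 a5 a6 <;> omega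
  · rw [count_peelG' hG h0 hd2 hmax 0]
    split_ifs with a1 a2 <;> omega

lemma reps_peelG : reps (peelG M d) = (reps M).erase d := by
  obtain ⟨hdge, hcd, hcm, hcp⟩ := dfacts hG h0 hd2 hmax
  ext x
  rw [mem_reps, Finset.mem_erase, mem_reps, count_peelG' hG h0 hd2 hmax x]
  by_cases h1 : x + 1 < d
  · rw [if_pos h1]
    constructor
    · exact fun h => ⟨by omega, h⟩
    · exact fun h => h.2
  · by_cases h2 : x + 1 = d
    · have hx : x = d - 1 := by omega
      subst hx
      rw [if_neg h1, if_pos h2]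
      constructor
      · omega
      · rintro ⟨_, hc⟩; omega
    · rw [if_neg h1, if_neg h2]
      constructor
      · intro h
        have := hmax (x + 2) h
        omega
      · rintro ⟨hxd, hc⟩
        have := hmax x hc
        omega

lemma sum_peelG' : (peelG M d).sum + 2 * d + 2 * (M.filter (fun x => d < x)).card = M.sum := by
  obtain ⟨hdge, hcd, hcm, hcp⟩ := dfacts hG h0 hd2 hmax
  have := sum_peelG M d (by omega)
  rw [hcd] at this
  omega

lemma sAbove_top : sAbove M (d + 1) = (M.filter (fun x => d < x)).card := by
  have h1 : sAbove M (d + 1) = (M.filter (fun x => d + 1 ≤ x)).card := by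
    apply sAbove_eq_card_filter
    intro x hx
    rcases Nat.lt_or_ge (M.count x) 2 with hc | hc
    · omega
    · have := hmax x hc; omega
  rw [h1]
  congr 1

end PeelG

lemma filter_split_card (A B : Multiset ℕ) (Q : ℕ → Prop) [DecidablePred Q] :
    ((A + B).filter Q).card = (A.filter Q).card + (B.filter Q).card := by
  rw [Multiset.filter_add, Multiset.card_add]

lemma sAbove_le (M A B : Multiset ℕ) (y : ℕ) (hMeq : M = A + B) :
    sAbove M y ≤ (A.filter (fun s => y ≤ s ∧ M.count s = 1)).card + B.card := by
  subst hMeq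
  unfold sAbove
  rw [Multiset.filter_add, Multiset.card_add]
  have h1 := Multiset.card_le_card
    (Multiset.filter_le (fun s => y ≤ s ∧ (A + B).count s = 1) B)
  omega

theorem fA_aux : ∀ (n : ℕ) (M : Multiset ℕ), M.card = n → M.count 0 = 0 → IsG M →
    StrA (f M) (reps M).card ∧ (f M).sum = M.sum ∧ (f M).card = kappa M := by
  intro n
  induction n using Nat.strong_induction_on with
  | _ n IH =>
  intro M hn h0 hG
  by_cases h : (reps M).Nonempty
  · set d := (reps M).max' h with hd_def
    have hd2 : 2 ≤ M.count d := mem_reps.1 ((reps M).max'_mem h)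
    have hdreps : d ∈ reps M := (reps M).max'_mem h
    have hmax : ∀ x, 2 ≤ M.count x → x ≤ d := fun x hx => (reps M).le_max' x (mem_reps.2 hx)
    obtain ⟨hdge, hcd, hcm, hcp⟩ := dfacts hG h0 hd2 hmax
    set π₁ := peelG M d with hπ₁
    obtain ⟨hG1, h01⟩ : IsG π₁ ∧ π₁.count 0 = 0 := isG_peelG hG h0 hd2 hmax
    have hreps1 : reps π₁ = (reps M).erase d := reps_peelG hG h0 hd2 hmax
    have hcnt1 : ∀ x, π₁.count x
        = if x + 1 < d then M.count x else if x + 1 = d then 0 else M.count (x + 2) :=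
      fun x => count_peelG' hG h0 hd2 hmax x
    have hcard1 : π₁.card + M.count d = M.card := card_peelG M d
    have hMge : 2 ≤ M.card := le_trans hd2 (Multiset.count_le_card d M)
    have hsum2 : π₁.sum + 2 * d + 2 * (M.filter (fun x => d < x)).card = M.sum :=
      sum_peelG' hG h0 hd2 hmax
    have hsatop : sAbove M (d + 1) = (M.filter (fun x => d < x)).card :=
      sAbove_top hG h0 hd2 hmax
    have hπ₁' : π₁ = M.filter (· < d) + (M.filter (fun x => d < x)).map (· - 2) := rfl
    have hkapM : kappa M = d + sAbove M (d + 1) := by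
      unfold kappa
      rw [dif_pos h, ← hd_def]
    obtain ⟨hStr, hsum1, hkap1⟩ := IH π₁.card (by omega) π₁ rfl h01 hG1
    set τ := f π₁ with hτ
    set t := (M.filter (fun x => d < x)).card with ht
    set j₁ := (reps π₁).card with hj₁
    have hjM : (reps M).card = j₁ + 1 := by
      rw [hj₁, hreps1, Finset.card_erase_of_mem hdreps]
      have : 1 ≤ (reps M).card := Finset.card_pos.2 h
      omega
    -- the key inequality
    have hkey : kappa π₁ + 2 ≤ d + t := by
      by_cases hne : (reps π₁).Nonempty
      · set D' := (reps π₁).max' hne with hD'_def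
        have hD'2 : 2 ≤ π₁.count D' := mem_reps.1 ((reps π₁).max'_mem hne)
        have hkap : kappa π₁ = D' + sAbove π₁ (D' + 1) := by
          unfold kappa
          rw [dif_pos hne, ← hD'_def]
        clear_value D'
        have hD'M : D' ∈ reps M ∧ D' ≠ d := by
          have hmem : D' ∈ (reps M).erase d := by
            rw [← hreps1]
            exact mem_reps.2 hD'2
          rw [Finset.mem_erase] at hmem
          exact ⟨hmem.2, hmem.1⟩
        have hcD'2 : 2 ≤ M.count D' := mem_reps.1 hD'M.1
        have hD'd : D' ≤ d := hmax D' hcD'2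
        have hD'1 : 2 ≤ D' := by
          have hne1 : D' ≠ 1 := fun hh => by rw [hh] at hcD'2; have := hG.1; omega
          have hne0 : D' ≠ 0 := fun hh => by rw [hh] at hcD'2; omega
          omega
        have hD'le : D' ≤ d - 2 := by
          have : D' ≠ d - 1 := fun hh => by rw [hh] at hcD'2; omega
          omega
        have hcD1 : M.count (D' + 1) = 0 := by
          have := hG.2 D' (by omega)
          omega
        -- bound sAbove π₁ (D'+1)
        have hsplit : sAbove π₁ (D' + 1)
            ≤ ((M.filter (· < d)).filter
                (fun s => D' + 1 ≤ s ∧ π₁.count s = 1)).card + t := by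
          have h1 := sAbove_le π₁ (M.filter (· < d))
            ((M.filter (fun x => d < x)).map (· - 2)) (D' + 1) hπ₁'
          rw [Multiset.card_map] at h1
          rw [ht]
          exact h1
        have hA : ((M.filter (· < d)).filter (fun s => D' + 1 ≤ s ∧ π₁.count s = 1)).card
            ≤ (d - 2) + 1 - (D' + 2) := by
          apply L1 _ (D' + 2) (d - 2)
          · intro x
            rw [Multiset.count_filter, Multiset.count_filter]
            split_ifs with q1 q2
            · have hcc := hcnt1 x
              split_ifs at hcc <;> omega
            · omega
            · omega
          · intro x hx
            rw [Multiset.mem_filter, Multiset.mem_filter] at hx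
            obtain ⟨⟨hxM, hxd⟩, hxD, hx1⟩ := hx
            have hcc := hcnt1 x
            rw [hx1] at hcc
            constructor
            · rcases eq_or_ne x (D' + 1) with rfl | hne2
              · exfalso
                split_ifs at hcc <;> omega
              · omega
            · rcases eq_or_ne x (d - 1) with rfl | hne2
              · exfalso
                split_ifs at hcc with c1 c2 <;> omega
              · omega
        omega
      · have hkap : kappa π₁ = π₁.card := by
          unfold kappa
          rw [dif_neg hne]
        have hrepsM : ∀ x, x ≠ d → ¬ 2 ≤ M.count x := by
          intro x hxd hxc
          have hmem : x ∈ (reps M).erase d := Finset.mem_erase.2 ⟨hxd, mem_reps.2 hxc⟩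
          rw [← hreps1] at hmem
          exact hne ⟨x, hmem⟩
        have hb : (M.filter (· < d)).card ≤ (d - 2) + 1 - 1 := by
          apply L1 _ 1 (d - 2)
          · intro x
            rw [Multiset.count_filter]
            split_ifs with q1
            · have := hrepsM x (by omega)
              omega
            · omega
          · intro x hx
            rw [Multiset.mem_filter] at hx
            obtain ⟨hxM, hxd⟩ := hx
            have hxp : 0 < M.count x := Multiset.count_pos.2 hxM
            have hx0 : x ≠ 0 := fun hh => by rw [hh] at hxp; omega
            have hx1 : x ≠ d - 1 := fun hh => by rw [hh] at hxp; omega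
            omega
        have hcards := card_parts M d
        have hcards2 : π₁.card = (M.filter (· < d)).card + t := by
          rw [hπ₁', ht, Multiset.card_add, Multiset.card_map]
        omega
    have hτ0 : τ.count 0 = 0 := hStr.2.2.2
    clear_value τ t j₁
    set c₀ := d + t - kappa π₁ - 2 with hc₀_def
    have hc₀ : (M.sum - τ.sum - 2 * τ.card - 4) / 2 = c₀ := by
      rw [hsum1, hc₀_def, hkap1]
      omega
    clear_value c₀
    have hfM : f M = unpeelA τ c₀ := by
      have h2 := f_pos h
      rw [← hd_def, ← hπ₁, ← hτ, hc₀] at h2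
      exact h2
    have hcnt : ∀ x, (f M).count x
        = (if x = 2 then c₀ + 2 else 0) + (if 2 ≤ x then τ.count (x - 2) else 0) := by
      intro x
      rw [hfM]
      exact count_unpeelA τ c₀ hτ0 x
    clear_value d π₁
    refine ⟨⟨?_, ?_, ?_, ?_⟩, ?_, ?_⟩
    · intro k hk1 hk2
      rcases eq_or_ne k 1 with rfl | hk
      · have h2 := hcnt 2
        norm_num [hτ0] at h2
        have h3 : (2:ℕ) * 1 = 2 := by norm_num
        rw [h3]
        omega
      · rw [hjM] at hk2
        have h2 := hcnt (2 * k)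
        have h1 := hStr.1 (k - 1) (by omega) (by omega)
        have h3 : 2 * (k - 1) = 2 * k - 2 := by omega
        rw [h3] at h1
        rw [h2]
        split_ifs <;> omega
    · intro x hx
      rw [hjM] at hx
      rw [hcnt x]
      have h1 := hStr.2.1 (x - 2) (by omega)
      split_ifs <;> omega
    · intro x hx hdvd
      rw [hjM] at hx
      rw [hcnt x]
      rcases Nat.lt_or_ge x 3 with h3 | h3
      · have hx1 : x = 1 ∨ x = 0 := by omega
        rcases hx1 with rfl | rfl
        · split_ifs <;> omega
        · exfalso; exact hdvd ⟨0, rfl⟩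
      · have h1 := hStr.2.2.1 (x - 2) (by omega) (by omega)
        split_ifs <;> omega
    · rw [hcnt 0]
      norm_num
    · rw [hfM, sum_unpeelA, hsum1, hkap1]
      omega
    · rw [hfM, card_unpeelA, hkap1, hkapM, hsatop]
      omega
  · have hfM : f M = M := f_neg h
    have hempty : reps M = ∅ := Finset.not_nonempty_iff_eq_empty.1 h
    have hno : ∀ x, x ≠ 0 → M.count x ≤ 1 := by
      intro x _
      by_contra hc
      have hmem : x ∈ reps M := mem_reps.2 (by omega)
      rw [hempty] at hmem
      exact absurd hmem (Finset.notMem_empty x)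
    rw [hfM, hempty]
    refine ⟨⟨?_, ?_, ?_, ?_⟩, rfl, ?_⟩
    · intro k hk1 hk2
      simp at hk2
      omega
    · intro x hx
      exact hno x (by omega)
    · intro x hx hdvd
      simp at hx
    · exact h0
    · unfold kappa
      rw [dif_neg h]

theorem fA (M : Multiset ℕ) (h0 : M.count 0 = 0) (hG : IsG M) :
    StrA (f M) (reps M).card ∧ (f M).sum = M.sum ∧ (f M).card = kappa M :=
  fA_aux M.card M rfl h0 hG

section UnpeelG

variable {N : Multiset ℕ} {d : ℕ}
  (hG1 : IsG N) (h01 : N.count 0 = 0) (hd2 : 2 ≤ d)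
  (hrep : ∀ x, 2 ≤ N.count x → x + 2 ≤ d) (hm1 : N.count (d - 1) = 0)

include hG1 h01 hd2 hrep hm1

lemma count_unpeelG' (x : ℕ) :
    (unpeelG N d).count x
      = if x < d then N.count x else if x = d then 2
        else if x = d + 1 then 0 else N.count (x - 2) := by
  rw [count_unpeelG]
  split_ifs with a1 a2 a3 a4 a5 a6 a7 a8 <;> omega

lemma isG_unpeelG : IsG (unpeelG N d) ∧ (unpeelG N d).count 0 = 0 := by
  refine ⟨⟨?_, ?_⟩, ?_⟩
  · rw [count_unpeelG' hG1 h01 hd2 hrep hm1 1]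
    have := hG1.1
    split_ifs <;> omega
  · intro j hj
    rw [count_unpeelG' hG1 h01 hd2 hrep hm1 j, count_unpeelG' hG1 h01 hd2 hrep hm1 (j + 1)]
    have e1 := hG1.2 j hj
    rcases Nat.lt_or_ge (j + 1) d with c1 | c1
    · rw [if_pos (by omega), if_pos (by omega)]
      exact e1
    · rcases eq_or_ne (j + 1) d with c2 | c2
      · -- j = d - 1
        have hj1 : j = d - 1 := by omega
        rw [if_pos (by omega), if_neg (by omega), if_pos c2, hj1, hm1]
      · rcases eq_or_ne j d with c3 | c3
        · rw [if_neg (by omega), if_pos c3, if_neg (by omega), if_neg (by omega),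
            if_pos (by omega)]
        · rcases eq_or_ne j (d + 1) with c4 | c4
          · rw [if_neg (by omega), if_neg (by omega), if_pos c4, if_neg (by omega),
              if_neg (by omega), if_neg (by omega)]
            have h5 : j + 1 - 2 = d := by omega
            rw [h5]
            rcases Nat.lt_or_ge (N.count d) 2 with c5 | c5
            · omega
            · have := hrep d c5
              omega
          · -- j ≥ d + 2
            have hj2 : d + 2 ≤ j := by omega
            rw [if_neg (by omega), if_neg (by omega), if_neg (by omega), if_neg (by omega),
              if_neg (by omega), if_neg (by omega)]
            have h5 : j + 1 - 2 = j - 2 + 1 := by omega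
            rw [h5]
            have e2 := hG1.2 (j - 2) (by omega)
            exact e2
  · rw [count_unpeelG' hG1 h01 hd2 hrep hm1 0, if_pos (by omega)]
    exact h01

lemma reps_unpeelG : reps (unpeelG N d) = insert d (reps N) := by
  ext x
  rw [mem_reps, Finset.mem_insert, mem_reps, count_unpeelG' hG1 h01 hd2 hrep hm1 x]
  split_ifs with c1 c2 c3
  · constructor
    · intro hh; right; exact hh
    · rintro (rfl | hh)
      · omega
      · exact hh
  · constructor
    · intro _; left; exact c2
    · intro _; omega
  · constructor
    · omega
    · rintro (rfl | hh)
      · omega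
      · have := hrep x hh
        omega
  · constructor
    · intro hh
      have := hrep (x - 2) hh
      omega
    · rintro (rfl | hh)
      · omega
      · have := hrep x hh
        omega

lemma max'_reps_unpeelG (hne : (reps (unpeelG N d)).Nonempty) :
    (reps (unpeelG N d)).max' hne = d := by
  apply le_antisymm
  · apply Finset.max'_le
    intro y hy
    rw [reps_unpeelG hG1 h01 hd2 hrep hm1, Finset.mem_insert] at hy
    rcases hy with rfl | hy
    · exact le_refl _
    · have := hrep y (mem_reps.1 hy)
      omega
  · apply Finset.le_max'
    rw [reps_unpeelG hG1 h01 hd2 hrep hm1]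
    exact Finset.mem_insert_self d _

lemma sAbove_d_eq : sAbove N d = (N.filter (fun x => d ≤ x)).card := by
  apply sAbove_eq_card_filter
  intro x hx
  rcases Nat.lt_or_ge (N.count x) 2 with hc | hc
  · omega
  · have := hrep x hc
    omega

lemma sAbove_unpeelG : sAbove (unpeelG N d) (d + 1) = sAbove N d := by
  unfold sAbove
  show ((N.filter (· < d) + Multiset.replicate 2 d
      + (N.filter (fun x => d ≤ x)).map (· + 2)).filter
        (fun s => d + 1 ≤ s ∧ (unpeelG N d).count s = 1)).card
    = (N.filter (fun s => d ≤ s ∧ N.count s = 1)).card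
  rw [Multiset.filter_add, Multiset.filter_add, Multiset.card_add, Multiset.card_add]
  have hz1 : (N.filter (· < d)).filter
      (fun s => d + 1 ≤ s ∧ (unpeelG N d).count s = 1) = 0 := by
    rw [Multiset.filter_eq_nil]
    intro a ha hcon
    have := Multiset.of_mem_filter ha
    omega
  have hz2 : (Multiset.replicate 2 d).filter
      (fun s => d + 1 ≤ s ∧ (unpeelG N d).count s = 1) = 0 := by
    rw [Multiset.filter_eq_nil]
    intro a ha hcon
    have := Multiset.eq_of_mem_replicate ha
    omega
  rw [hz1, hz2]
  simp only [Multiset.card_zero, zero_add]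
  rw [Multiset.filter_map, Multiset.card_map]
  rw [Multiset.filter_filter]
  congr 1
  apply Multiset.filter_congr
  intro x hx
  simp only [Function.comp]
  constructor
  · rintro ⟨⟨_, h2⟩, h3⟩
    have hcnt : (unpeelG N d).count (x + 2) = N.count x := by
      rw [count_unpeelG' hG1 h01 hd2 hrep hm1 (x + 2), if_neg (by omega), if_neg (by omega),
        if_neg (by omega), show x + 2 - 2 = x from by omega]
    rw [hcnt] at h2
    exact ⟨h3, h2⟩
  · rintro ⟨h3, h2⟩
    have hcnt : (unpeelG N d).count (x + 2) = N.count x := by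
      rw [count_unpeelG' hG1 h01 hd2 hrep hm1 (x + 2), if_neg (by omega), if_neg (by omega),
        if_neg (by omega), show x + 2 - 2 = x from by omega]
    exact ⟨⟨by omega, by rw [hcnt]; exact h2⟩, h3⟩

lemma peelG_unpeelG : peelG (unpeelG N d) d = N := by
  ext x
  rw [count_peelG _ d (by omega) x]
  rcases Nat.lt_or_ge x (d - 1) with c1 | c1
  · rw [if_pos (by omega), if_neg (by omega), count_unpeelG' hG1 h01 hd2 hrep hm1 x,
      if_pos (by omega)]
    omega
  · rcases eq_or_ne x (d - 1) with rfl | c2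
    · rw [if_pos (by omega), if_pos (by omega), count_unpeelG' hG1 h01 hd2 hrep hm1 (d - 1),
        if_pos (by omega), hm1, count_unpeelG' hG1 h01 hd2 hrep hm1 (d - 1 + 2),
        if_neg (by omega), if_neg (by omega), if_pos (by omega)]
    · -- x ≥ d
      rw [if_neg (by omega), if_pos (by omega), count_unpeelG' hG1 h01 hd2 hrep hm1 (x + 2),
        if_neg (by omega), if_neg (by omega), if_neg (by omega)]
      have h5 : x + 2 - 2 = x := by omega
      rw [h5]
      omega

end UnpeelG

theorem gG_aux : ∀ (n : ℕ) (σ : Multiset ℕ) (j : ℕ), σ.card = n → StrA σ j →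
    IsG (g σ) ∧ (g σ).count 0 = 0 ∧ (g σ).sum = σ.sum ∧ kappa (g σ) = σ.card := by
  intro n
  induction n using Nat.strong_induction_on with
  | _ n IH =>
  intro σ j hn hA
  obtain ⟨hA1, hA2, hA3, hA4⟩ := hA
  by_cases hg : 2 ≤ σ.count 2
  · -- main case
    have hj1 : 1 ≤ j := by
      by_contra hj
      have := hA2 2 (by omega)
      omega
    have h0σ : σ.count 0 = 0 := hA4
    have h1σ : σ.count 1 = 0 := hA3 1 (by omega) (by omega)
    set σ₁ := peelA σ with hσ₁
    have hcnt₁ : ∀ x, σ₁.count x = if 1 ≤ x then σ.count (x + 2) else 0 :=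
      fun x => count_peelA σ h0σ h1σ x
    have hA' : StrA σ₁ (j - 1) := by
      refine ⟨?_, ?_, ?_, ?_⟩
      · intro k hk1 hk2
        rw [hcnt₁ (2 * k), if_pos (by omega), show 2 * k + 2 = 2 * (k + 1) from by ring]
        exact hA1 (k + 1) (by omega) (by omega)
      · intro x hx
        rcases eq_or_ne x 0 with rfl | hx0
        · rw [hcnt₁ 0]
          omega
        · rw [hcnt₁ x, if_pos (by omega)]
          exact hA2 (x + 2) (by omega)
      · intro x hx hdvd
        rw [hcnt₁ x]
        split_ifs with h1
        · exact hA3 (x + 2) (by omega) (by omega)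
        · rfl
      · rw [hcnt₁ 0]
        norm_num
    have hcard₁ : σ₁.card + σ.count 2 = σ.card := card_peelA σ
    have hsum₁ : σ₁.sum + 2 * σ.count 2 + 2 * σ₁.card = σ.sum := by
      have h2 := sum_peelA σ h0σ h1σ
      rw [← hσ₁] at h2
      omega
    obtain ⟨hG1, h01, hsum2, hkap1⟩ :
        IsG (g σ₁) ∧ (g σ₁).count 0 = 0 ∧ (g σ₁).sum = σ₁.sum ∧ kappa (g σ₁) = σ₁.card :=
      IH σ₁.card (by omega) σ₁ (j - 1) rfl hA'
    set π₁ := g σ₁ with hπ₁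
    set Δ := σ.sum - σ₁.sum with hΔ
    have hΔval : Δ = 2 * σ.count 2 + 2 * σ₁.card := by
      rw [hΔ]
      omega
    set dd := Nat.find (hh_exists π₁ Δ) with hdd
    have hfind1 : Δ ≤ hh π₁ dd := by
      rw [hdd]
      exact Nat.find_spec (hh_exists π₁ Δ)
    have hfind2 : ∀ y, y < dd → hh π₁ y < Δ := by
      intro y hy
      rw [hdd] at hy
      have := Nat.find_min (hh_exists π₁ Δ) hy
      omega
    have hgσ : g σ = unpeelG π₁ dd := by
      have h2 := g_pos hg
      rw [← hσ₁, ← hπ₁, ← hΔ, ← hdd] at h2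
      exact h2
    clear_value σ₁ π₁ Δ dd
    have hd2 : 2 ≤ dd ∧ ∀ x, 2 ≤ π₁.count x → x + 2 ≤ dd := by
      by_cases hne : (reps π₁).Nonempty
      · obtain ⟨D₁, hD₁⟩ : ∃ D₁, D₁ = (reps π₁).max' hne := ⟨_, rfl⟩
        have hD₁2 : 2 ≤ π₁.count D₁ := by
          rw [hD₁]
          exact mem_reps.1 ((reps π₁).max'_mem hne)
        have hkapval : kappa π₁ = D₁ + sAbove π₁ (D₁ + 1) := by
          unfold kappa
          rw [dif_pos hne, ← hD₁]
        have hmax' : ∀ x, 2 ≤ π₁.count x → x ≤ D₁ := by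
          intro x hx
          rw [hD₁]
          exact Finset.le_max' _ x (mem_reps.2 hx)
        have hD₁ge : 2 ≤ D₁ := by
          have hne1 : D₁ ≠ 1 := fun hh => by rw [hh] at hD₁2; have := hG1.1; omega
          have hne0 : D₁ ≠ 0 := fun hh => by rw [hh] at hD₁2; omega
          omega
        have hhval : hh π₁ (D₁ + 1) = 2 * σ₁.card + 2 := by
          unfold hh
          omega
        have hlow : hh π₁ (D₁ + 1) < Δ := by omega
        have hge : D₁ + 2 ≤ dd := by
          by_contra hc
          have h3 : dd ≤ D₁ + 1 := by omega
          have := hh_mono π₁ h3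
          omega
        exact ⟨by omega, fun x hx => by have := hmax' x hx; omega⟩
      · have hsing : ∀ x, ¬ 2 ≤ π₁.count x := fun x hx => hne ⟨x, mem_reps.2 hx⟩
        have hkapval : kappa π₁ = π₁.card := by
          unfold kappa
          rw [dif_neg hne]
        have hsab : sAbove π₁ 1 = π₁.card := by
          unfold sAbove
          rw [Multiset.filter_eq_self.2]
          intro a ha
          have hc1 : 0 < π₁.count a := Multiset.count_pos.2 ha
          have hc2 := hsing a
          have ha0 : a ≠ 0 := fun h => by rw [h] at hc1; omega
          exact ⟨by omega, by omega⟩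
        have hlow : hh π₁ 1 < Δ := by
          unfold hh
          omega
        have hge : 2 ≤ dd := by
          by_contra hc
          have h3 : dd ≤ 1 := by omega
          have := hh_mono π₁ h3
          omega
        exact ⟨hge, fun x hx => absurd hx (hsing x)⟩
    obtain ⟨hdd2, hrep⟩ := hd2
    have hlow' : hh π₁ (dd - 1) < Δ := hfind2 (dd - 1) (by omega)
    have hexact : hh π₁ dd = Δ := by
      have hst : hh π₁ dd ≤ hh π₁ (dd - 1) + 2 := by
        have h3 := hh_step π₁ (dd - 1)
        rw [show dd - 1 + 1 = dd from by omega] at h3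
        exact h3
      have h2a : 2 ∣ hh π₁ (dd - 1) := ⟨(dd - 1) + sAbove π₁ (dd - 1), by unfold hh; ring⟩
      have h2b : 2 ∣ Δ := ⟨σ.count 2 + σ₁.card, by omega⟩
      omega
    have hm1 : π₁.count (dd - 1) = 0 := by
      rcases Nat.lt_or_ge (π₁.count (dd - 1)) 1 with h | h
      · omega
      · have hn2 : ¬ 2 ≤ π₁.count (dd - 1) := fun hc => by have := hrep _ hc; omega
        have hc1 : π₁.count (dd - 1) = 1 := by omega
        exfalso
        have h3 := sAbove_step π₁ (dd - 1)
        rw [hc1, if_pos rfl, show dd - 1 + 1 = dd from by omega] at h3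
        unfold hh at hlow' hexact
        omega
    obtain ⟨hGout, h0out⟩ := isG_unpeelG hG1 h01 hdd2 hrep hm1
    have hsumout : (unpeelG π₁ dd).sum = σ.sum := by
      rw [sum_unpeelG]
      have hsd : sAbove π₁ dd = (π₁.filter (fun x => dd ≤ x)).card :=
        sAbove_d_eq hG1 h01 hdd2 hrep hm1
      unfold hh at hexact
      omega
    have hkapout : kappa (unpeelG π₁ dd) = σ.card := by
      have hne2 : (reps (unpeelG π₁ dd)).Nonempty := by
        refine ⟨dd, ?_⟩
        rw [reps_unpeelG hG1 h01 hdd2 hrep hm1]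
        exact Finset.mem_insert_self _ _
      unfold kappa
      rw [dif_pos hne2, max'_reps_unpeelG hG1 h01 hdd2 hrep hm1 hne2,
        sAbove_unpeelG hG1 h01 hdd2 hrep hm1]
      unfold hh at hexact
      omega
    rw [hgσ]
    exact ⟨hGout, h0out, hsumout, hkapout⟩
  · -- base case
    have hgσ : g σ = σ := g_neg hg
    have hj0 : j = 0 := by
      by_contra hj
      have h2 := hA1 1 (by omega) (by omega)
      rw [show 2 * 1 = 2 from by norm_num] at h2
      omega
    subst hj0
    have hle : ∀ x, x ≠ 0 → σ.count x ≤ 1 := fun x hx => hA2 x (by omega)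
    have hrepsσ : reps σ = ∅ := by
      rw [Finset.eq_empty_iff_forall_notMem]
      intro x hx
      have h2 := mem_reps.1 hx
      rcases eq_or_ne x 0 with rfl | hx0
      · omega
      · have := hle x hx0
        omega
    rw [hgσ]
    refine ⟨⟨by have := hle 1 (by omega); omega, ?_⟩, hA4, rfl, ?_⟩
    · intro i hi
      have g1 := hle i (by omega)
      have g2 := hle (i + 1) (by omega)
      omega
    · unfold kappa
      rw [dif_neg (by rw [hrepsσ]; exact Finset.not_nonempty_empty)]

theorem gG (σ : Multiset ℕ) (j : ℕ) (hA : StrA σ j) :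
    IsG (g σ) ∧ (g σ).count 0 = 0 ∧ (g σ).sum = σ.sum ∧ kappa (g σ) = σ.card :=
  gG_aux σ.card σ j rfl hA

lemma peelA_unpeelA (τ : Multiset ℕ) (c : ℕ) (h0 : τ.count 0 = 0) :
    peelA (unpeelA τ c) = τ := by
  have hu0 : (unpeelA τ c).count 0 = 0 := by
    rw [count_unpeelA τ c h0 0]
    norm_num
  have hu1 : (unpeelA τ c).count 1 = 0 := by
    rw [count_unpeelA τ c h0 1]
    norm_num
  ext x
  rw [count_peelA _ hu0 hu1 x]
  split_ifs with h1
  · rw [count_unpeelA τ c h0 (x + 2), if_neg (by omega), if_pos (by omega),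
      show x + 2 - 2 = x from by omega]
    omega
  · have : x = 0 := by omega
    rw [this, h0]

theorem gf_aux : ∀ (n : ℕ) (M : Multiset ℕ), M.card = n → M.count 0 = 0 → IsG M →
    g (f M) = M := by
  intro n
  induction n using Nat.strong_induction_on with
  | _ n IH =>
  intro M hn h0 hG
  by_cases h : (reps M).Nonempty
  · obtain ⟨d, hd_def⟩ : ∃ d, d = (reps M).max' h := ⟨_, rfl⟩
    have hd2 : 2 ≤ M.count d := by
      rw [hd_def]
      exact mem_reps.1 ((reps M).max'_mem h)
    have hmax : ∀ x, 2 ≤ M.count x → x ≤ d := by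
      intro x hx
      rw [hd_def]
      exact (reps M).le_max' x (mem_reps.2 hx)
    obtain ⟨hdge, hcd, hcm, hcp⟩ := dfacts hG h0 hd2 hmax
    obtain ⟨hG1, h01⟩ : IsG (peelG M d) ∧ (peelG M d).count 0 = 0 := isG_peelG hG h0 hd2 hmax
    have hcnt1 : ∀ x, (peelG M d).count x
        = if x + 1 < d then M.count x else if x + 1 = d then 0 else M.count (x + 2) :=
      fun x => count_peelG' hG h0 hd2 hmax x
    have hcard1 : (peelG M d).card + M.count d = M.card := card_peelG M d
    have hMge : 2 ≤ M.card := le_trans hd2 (Multiset.count_le_card d M)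
    have hsum2 : (peelG M d).sum + 2 * d + 2 * (M.filter (fun x => d < x)).card = M.sum :=
      sum_peelG' hG h0 hd2 hmax
    obtain ⟨hStr1, hsum1, hkap1⟩ := fA (peelG M d) h01 hG1
    obtain ⟨hStrM, hsumM, hkapM⟩ := fA M h0 hG
    have hIH : g (f (peelG M d)) = peelG M d := IH (peelG M d).card (by omega) _ rfl h01 hG1
    -- f M = unpeelA (f (peelG M d)) c₀
    have hfM : f M = unpeelA (f (peelG M d))
        ((M.sum - (f (peelG M d)).sum - 2 * (f (peelG M d)).card - 4) / 2) := by
      have h2 := f_pos h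
      rw [← hd_def] at h2
      exact h2
    have hτ0 : (f (peelG M d)).count 0 = 0 := hStr1.2.2.2
    -- guard
    have hjM : 1 ≤ (reps M).card := Finset.card_pos.2 h
    have hg2 : 2 ≤ (f M).count 2 := by
      have h2 := hStrM.1 1 (by omega) (by omega)
      rw [show 2 * 1 = 2 from by norm_num] at h2
      exact h2
    have hpe : peelA (f M) = f (peelG M d) := by
      rw [hfM]
      exact peelA_unpeelA _ _ hτ0
    have hgf : g (f M) = unpeelG (g (f (peelG M d)))
        (Nat.find (hh_exists (g (f (peelG M d))) ((f M).sum - (f (peelG M d)).sum))) := by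
      have h2 := g_pos hg2
      rw [hpe] at h2
      exact h2
    rw [hIH] at hgf
    -- Δ' = M.sum - (peelG M d).sum
    have hΔ' : (f M).sum - (f (peelG M d)).sum
        = 2 * d + 2 * (M.filter (fun x => d < x)).card := by
      rw [hsumM, hsum1]
      omega
    -- hrep for π₁ := peelG M d
    have hrep : ∀ x, 2 ≤ (peelG M d).count x → x + 2 ≤ d := by
      intro x hx
      have h2 := hcnt1 x
      split_ifs at h2 with c1 c2
      · omega
      · omega
      · rw [h2] at hx
        have := hmax (x + 2) hx
        omega
    have hm1 : (peelG M d).count (d - 1) = 0 := by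
      have h2 := hcnt1 (d - 1)
      split_ifs at h2 with c1 c2
      · omega
      · exact h2
      · omega
    -- sAbove (peelG M d) d = t
    have hsad : sAbove (peelG M d) d = (M.filter (fun x => d < x)).card := by
      rw [sAbove_d_eq hG1 h01 (by omega) hrep hm1]
      have hcc : ((peelG M d).filter (fun x => d ≤ x)).card
          = ((M.filter (· < d)).filter (fun x => d ≤ x)).card
            + (((M.filter (fun x => d < x)).map (· - 2)).filter (fun x => d ≤ x)).card :=
        filter_split_card _ _ _
      have hz1 : (M.filter (· < d)).filter (fun x => d ≤ x) = 0 := by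
        rw [Multiset.filter_eq_nil]
        intro a ha _
        have := Multiset.of_mem_filter ha
        omega
      have hz2 : ((M.filter (fun x => d < x)).map (· - 2)).filter (fun x => d ≤ x)
          = (M.filter (fun x => d < x)).map (· - 2) := by
        rw [Multiset.filter_eq_self]
        intro a ha
        obtain ⟨b, hb, rfl⟩ := Multiset.mem_map.1 ha
        have hb1 : d < b := Multiset.of_mem_filter hb
        have hb2 : b ∈ M := Multiset.mem_of_mem_filter hb
        have hb3 : b ≠ d + 1 := by
          intro hh
          rw [hh] at hb2
          have := Multiset.count_pos.2 hb2
          omega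
        omega
      rw [hcc, hz1, hz2, Multiset.card_map]
      simp
    have hfind : Nat.find (hh_exists (peelG M d) ((f M).sum - (f (peelG M d)).sum)) = d := by
      rw [Nat.find_eq_iff]
      constructor
      · unfold hh
        omega
      · intro m hm
        push_neg
        have hstep : hh (peelG M d) (d - 1) + 2 = hh (peelG M d) d := by
          have h3 := sAbove_step (peelG M d) (d - 1)
          rw [hm1, show d - 1 + 1 = d from by omega] at h3
          norm_num at h3
          unfold hh
          omega
        have hmono := hh_mono (peelG M d) (show m ≤ d - 1 from by omega)
        unfold hh at hstep hmono ⊢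
        omega
    rw [hfind] at hgf
    rw [hgf]
    -- finally unpeelG (peelG M d) d = M
    ext x
    rw [count_unpeelG' hG1 h01 (by omega) hrep hm1 x]
    rcases Nat.lt_or_ge x d with c1 | c1
    · rw [if_pos c1, hcnt1 x]
      split_ifs with c2 c3
      · rfl
      · have hx : x = d - 1 := by omega
        rw [hx]
        omega
      · omega
    · rcases eq_or_ne x d with rfl | c2
      · rw [if_neg (by omega), if_pos rfl]
        omega
      · rcases eq_or_ne x (d + 1) with rfl | c3
        · rw [if_neg (by omega), if_neg (by omega), if_pos rfl]
          omega
        · rw [if_neg (by omega), if_neg (by omega), if_neg (by omega), hcnt1 (x - 2),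
            if_neg (by omega), if_neg (by omega), show x - 2 + 2 = x from by omega]
  · have hfM : f M = M := f_neg h
    rw [hfM]
    apply g_neg
    intro hc
    exact h ⟨2, mem_reps.2 hc⟩

theorem gf (M : Multiset ℕ) (h0 : M.count 0 = 0) (hG : IsG M) : g (f M) = M :=
  gf_aux M.card M rfl h0 hG

theorem fg_aux : ∀ (n : ℕ) (σ : Multiset ℕ) (j : ℕ), σ.card = n → StrA σ j →
    f (g σ) = σ := by
  intro n
  induction n using Nat.strong_induction_on with
  | _ n IH =>
  intro σ j hn hA
  obtain ⟨hA1, hA2, hA3, hA4⟩ := hA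
  by_cases hg : 2 ≤ σ.count 2
  · have hj1 : 1 ≤ j := by
      by_contra hj
      have := hA2 2 (by omega)
      omega
    have h0σ : σ.count 0 = 0 := hA4
    have h1σ : σ.count 1 = 0 := hA3 1 (by omega) (by omega)
    set σ₁ := peelA σ with hσ₁
    have hcnt₁ : ∀ x, σ₁.count x = if 1 ≤ x then σ.count (x + 2) else 0 :=
      fun x => count_peelA σ h0σ h1σ x
    have hA' : StrA σ₁ (j - 1) := by
      refine ⟨?_, ?_, ?_, ?_⟩
      · intro k hk1 hk2
        rw [hcnt₁ (2 * k), if_pos (by omega), show 2 * k + 2 = 2 * (k + 1) from by ring]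
        exact hA1 (k + 1) (by omega) (by omega)
      · intro x hx
        rcases eq_or_ne x 0 with rfl | hx0
        · rw [hcnt₁ 0]
          omega
        · rw [hcnt₁ x, if_pos (by omega)]
          exact hA2 (x + 2) (by omega)
      · intro x hx hdvd
        rw [hcnt₁ x]
        split_ifs with h1
        · exact hA3 (x + 2) (by omega) (by omega)
        · rfl
      · rw [hcnt₁ 0]
        norm_num
    have h0σ₁ : σ₁.count 0 = 0 := hA'.2.2.2
    have hcard₁ : σ₁.card + σ.count 2 = σ.card := card_peelA σ
    have hsum₁ : σ₁.sum + 2 * σ.count 2 + 2 * σ₁.card = σ.sum := by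
      have h2 := sum_peelA σ h0σ h1σ
      rw [← hσ₁] at h2
      omega
    obtain ⟨hG1, h01, hsum2, hkap1⟩ :
        IsG (g σ₁) ∧ (g σ₁).count 0 = 0 ∧ (g σ₁).sum = σ₁.sum ∧ kappa (g σ₁) = σ₁.card :=
      gG σ₁ (j - 1) hA'
    have hIH : f (g σ₁) = σ₁ := IH σ₁.card (by omega) σ₁ (j - 1) rfl hA'
    set π₁ := g σ₁ with hπ₁
    have hIH2 : f π₁ = σ₁ := hIH
    set Δ := σ.sum - σ₁.sum with hΔ
    have hΔval : Δ = 2 * σ.count 2 + 2 * σ₁.card := by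
      rw [hΔ]
      omega
    set dd := Nat.find (hh_exists π₁ Δ) with hdd
    have hfind1 : Δ ≤ hh π₁ dd := by
      rw [hdd]
      exact Nat.find_spec (hh_exists π₁ Δ)
    have hfind2 : ∀ y, y < dd → hh π₁ y < Δ := by
      intro y hy
      rw [hdd] at hy
      have := Nat.find_min (hh_exists π₁ Δ) hy
      omega
    have hgσ : g σ = unpeelG π₁ dd := by
      have h2 := g_pos hg
      rw [← hσ₁, ← hπ₁, ← hΔ, ← hdd] at h2
      exact h2
    clear_value σ₁ π₁ Δ dd
    have hd2 : 2 ≤ dd ∧ ∀ x, 2 ≤ π₁.count x → x + 2 ≤ dd := by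
      by_cases hne : (reps π₁).Nonempty
      · obtain ⟨D₁, hD₁⟩ : ∃ D₁, D₁ = (reps π₁).max' hne := ⟨_, rfl⟩
        have hD₁2 : 2 ≤ π₁.count D₁ := by
          rw [hD₁]
          exact mem_reps.1 ((reps π₁).max'_mem hne)
        have hkapval : kappa π₁ = D₁ + sAbove π₁ (D₁ + 1) := by
          unfold kappa
          rw [dif_pos hne, ← hD₁]
        have hmax' : ∀ x, 2 ≤ π₁.count x → x ≤ D₁ := by
          intro x hx
          rw [hD₁]
          exact Finset.le_max' _ x (mem_reps.2 hx)
        have hD₁ge : 2 ≤ D₁ := by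
          have hne1 : D₁ ≠ 1 := fun hh => by rw [hh] at hD₁2; have := hG1.1; omega
          have hne0 : D₁ ≠ 0 := fun hh => by rw [hh] at hD₁2; omega
          omega
        have hhval : hh π₁ (D₁ + 1) = 2 * σ₁.card + 2 := by
          unfold hh
          omega
        have hlow : hh π₁ (D₁ + 1) < Δ := by omega
        have hge : D₁ + 2 ≤ dd := by
          by_contra hc
          have h3 : dd ≤ D₁ + 1 := by omega
          have := hh_mono π₁ h3
          omega
        exact ⟨by omega, fun x hx => by have := hmax' x hx; omega⟩
      · have hsing : ∀ x, ¬ 2 ≤ π₁.count x := fun x hx => hne ⟨x, mem_reps.2 hx⟩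
        have hkapval : kappa π₁ = π₁.card := by
          unfold kappa
          rw [dif_neg hne]
        have hsab : sAbove π₁ 1 = π₁.card := by
          unfold sAbove
          rw [Multiset.filter_eq_self.2]
          intro a ha
          have hc1 : 0 < π₁.count a := Multiset.count_pos.2 ha
          have hc2 := hsing a
          have ha0 : a ≠ 0 := fun h => by rw [h] at hc1; omega
          exact ⟨by omega, by omega⟩
        have hlow : hh π₁ 1 < Δ := by
          unfold hh
          omega
        have hge : 2 ≤ dd := by
          by_contra hc
          have h3 : dd ≤ 1 := by omega
          have := hh_mono π₁ h3
          omega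
        exact ⟨hge, fun x hx => absurd hx (hsing x)⟩
    obtain ⟨hdd2, hrep⟩ := hd2
    have hlow' : hh π₁ (dd - 1) < Δ := hfind2 (dd - 1) (by omega)
    have hexact : hh π₁ dd = Δ := by
      have hst : hh π₁ dd ≤ hh π₁ (dd - 1) + 2 := by
        have h3 := hh_step π₁ (dd - 1)
        rw [show dd - 1 + 1 = dd from by omega] at h3
        exact h3
      have h2a : 2 ∣ hh π₁ (dd - 1) := ⟨(dd - 1) + sAbove π₁ (dd - 1), by unfold hh; ring⟩
      have h2b : 2 ∣ Δ := ⟨σ.count 2 + σ₁.card, by omega⟩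
      omega
    have hm1 : π₁.count (dd - 1) = 0 := by
      rcases Nat.lt_or_ge (π₁.count (dd - 1)) 1 with hcc | hcc
      · omega
      · have hn2 : ¬ 2 ≤ π₁.count (dd - 1) := fun hc => by have := hrep _ hc; omega
        have hc1 : π₁.count (dd - 1) = 1 := by omega
        exfalso
        have h3 := sAbove_step π₁ (dd - 1)
        rw [hc1, if_pos rfl, show dd - 1 + 1 = dd from by omega] at h3
        unfold hh at hlow' hexact
        omega
    have hsumout : (unpeelG π₁ dd).sum = σ.sum := by
      rw [sum_unpeelG]
      have hsd : sAbove π₁ dd = (π₁.filter (fun x => dd ≤ x)).card :=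
        sAbove_d_eq hG1 h01 hdd2 hrep hm1
      unfold hh at hexact
      omega
    -- now compute f (unpeelG π₁ dd)
    have hne2 : (reps (unpeelG π₁ dd)).Nonempty := by
      refine ⟨dd, ?_⟩
      rw [reps_unpeelG hG1 h01 hdd2 hrep hm1]
      exact Finset.mem_insert_self _ _
    have hmaxeq : (reps (unpeelG π₁ dd)).max' hne2 = dd :=
      max'_reps_unpeelG hG1 h01 hdd2 hrep hm1 hne2
    have h2 := f_pos hne2
    rw [hmaxeq, peelG_unpeelG hG1 h01 hdd2 hrep hm1, hIH2] at h2
    have hc : ((unpeelG π₁ dd).sum - σ₁.sum - 2 * σ₁.card - 4) / 2 = σ.count 2 - 2 := by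
      rw [hsumout]
      omega
    rw [hc] at h2
    rw [hgσ, h2]
    -- unpeelA σ₁ (count2 - 2) = σ
    ext x
    rw [count_unpeelA σ₁ _ h0σ₁ x]
    rcases Nat.lt_or_ge x 2 with c1 | c1
    · rw [if_neg (by omega), if_neg (by omega)]
      rcases (by omega : x = 0 ∨ x = 1) with rfl | rfl
      · omega
      · omega
    · rcases eq_or_ne x 2 with rfl | c2
      · rw [if_pos rfl, if_pos (by omega), show (2:ℕ) - 2 = 0 from by omega, h0σ₁]
        omega
      · rw [if_neg c2, if_pos (by omega), hcnt₁ (x - 2), if_pos (by omega),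
          show x - 2 + 2 = x from by omega]
        omega
  · have hj0 : j = 0 := by
      by_contra hj
      have h2 := hA1 1 (by omega) (by omega)
      rw [show 2 * 1 = 2 from by norm_num] at h2
      omega
    subst hj0
    have hgσ : g σ = σ := g_neg hg
    rw [hgσ]
    apply f_neg
    rintro ⟨x, hx⟩
    have h2 := mem_reps.1 hx
    rcases eq_or_ne x 0 with rfl | hx0
    · omega
    · have := hA2 x (by omega)
      omega

theorem fg (σ : Multiset ℕ) (j : ℕ) (hA : StrA σ j) : f (g σ) = σ :=
  fg_aux σ.card σ j rfl hA

lemma lrp_of_StrA {M : Multiset ℕ} {j : ℕ} (h : StrA M j) : lrp M = 2 * j := by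
  rcases Nat.eq_zero_or_pos j with rfl | hj
  · have hreps : reps M = ∅ := by
      rw [Finset.eq_empty_iff_forall_notMem]
      intro x hx
      have hc := mem_reps.1 hx
      rcases eq_or_ne x 0 with rfl | hx0
      · have := h.2.2.2
        omega
      · have := h.2.1 x (by omega)
        omega
    unfold lrp
    rw [hreps]
    rfl
  · apply le_antisymm
    · apply Finset.sup_le
      intro b hb
      have hc := mem_reps.1 hb
      simp only [id_eq]
      by_contra hcc
      have := h.2.1 b (by omega)
      omega
    · have hmem : 2 * j ∈ reps M := mem_reps.2 (h.1 j (by omega) le_rfl)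
      exact Finset.le_sup (f := id) hmem

lemma StrA_IsA {M : Multiset ℕ} {j : ℕ} (h : StrA M j) :
    (∀ x, Odd x → M.count x ≤ 1) ∧ (∀ x, Odd x → x < lrp M → M.count x = 0)
      ∧ (∀ x, Even x → 0 < x → x < lrp M → 2 ≤ M.count x) := by
  have hlrp : lrp M = 2 * j := lrp_of_StrA h
  refine ⟨?_, ?_, ?_⟩
  · intro x hox
    have hx1 := Nat.odd_iff.1 hox
    rcases Nat.lt_or_ge x (2 * j) with hlt | hge
    · have := h.2.2.1 x hlt (by omega)
      omega
    · exact h.2.1 x (by omega)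
  · intro x hox hxl
    rw [hlrp] at hxl
    exact h.2.2.1 x hxl (by have := Nat.odd_iff.1 hox; omega)
  · intro x hex h0x hxl
    rw [hlrp] at hxl
    obtain ⟨k, hk⟩ := hex
    have h2 := h.1 k (by omega) (by omega)
    rw [show 2 * k = x from by omega] at h2
    exact h2

lemma IsA_StrA {M : Multiset ℕ} (h0 : M.count 0 = 0)
    (h1 : ∀ x, Odd x → M.count x ≤ 1) (h2 : ∀ x, Odd x → x < lrp M → M.count x = 0)
    (h3 : ∀ x, Even x → 0 < x → x < lrp M → 2 ≤ M.count x) :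
    StrA M (lrp M / 2) := by
  by_cases hne : (reps M).Nonempty
  · obtain ⟨b, hb, hsupb⟩ := Finset.exists_mem_eq_sup (reps M) hne id
    have hbc : 2 ≤ M.count b := mem_reps.1 hb
    have hlrpb : lrp M = b := hsupb
    have hbe : b % 2 = 0 := by
      rcases Nat.even_or_odd b with he | ho
      · exact Nat.even_iff.1 he
      · have := h1 b ho
        omega
    have hev : lrp M % 2 = 0 := by rw [hlrpb]; exact hbe
    refine ⟨?_, ?_, ?_, h0⟩
    · intro k hk1 hk2
      rcases eq_or_ne (2 * k) (lrp M) with he | hne2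
      · rw [he, hlrpb]
        exact hbc
      · exact h3 (2 * k) ⟨k, by ring⟩ (by omega) (by omega)
    · intro x hx
      by_contra hc
      have hxr : x ∈ reps M := mem_reps.2 (by omega)
      have hle : id x ≤ lrp M := Finset.le_sup (f := id) hxr
      simp only [id] at hle
      omega
    · intro x hx hdvd
      exact h2 x (Nat.odd_iff.2 (by omega)) (by omega)
  · have hreps : reps M = ∅ := Finset.not_nonempty_iff_eq_empty.1 hne
    have hlrp0 : lrp M = 0 := by
      unfold lrp
      rw [hreps]
      rfl
    rw [hlrp0]
    refine ⟨by intro k hk1 hk2; omega, ?_, by intro x hx1 hx2; omega, h0⟩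
    intro x hx
    by_contra hc
    exact hne ⟨x, mem_reps.2 (by omega)⟩

end GA

open GA

/-- The largest repeated part of a partition (`0` if no part is repeated). -/
def largestRepeatedPart {n : ℕ} (π : n.Partition) : ℕ :=
  (π.parts.toFinset.filter (fun j => 2 ≤ π.parts.count j)).sup id

/-- The bijection `f : 𝒢₂ → 𝒜₂`: the number of partitions of `n` counted by Gordon's
`G_{3,2}(n)` (`1` appears at most once, and `j` and `j+1` together appear at most twice) equals
the number counted by Andrews' `A₂(n)`. -/
theorem G32_eq_A2 (n : ℕ) :
    Nat.card {π : n.Partition //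
        π.parts.count 1 ≤ 1 ∧
        (∀ j, 1 ≤ j → π.parts.count j + π.parts.count (j + 1) ≤ 2)} =
      Nat.card {π : n.Partition //
        (∀ j, Odd j → π.parts.count j ≤ 1) ∧
        (∀ j, Odd j → j < largestRepeatedPart π → π.parts.count j = 0) ∧
        (∀ j, Even j → 0 < j → j < largestRepeatedPart π → 2 ≤ π.parts.count j)} := by
  have hcount0 : ∀ π : n.Partition, π.parts.count 0 = 0 := by
    intro π
    rw [Multiset.count_eq_zero]
    intro hmem
    exact absurd (π.parts_pos hmem) (lt_irrefl 0)
  have hlrpeq : ∀ π : n.Partition, largestRepeatedPart π = lrp π.parts := fun _ => rfl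
  apply Nat.card_congr
  refine ⟨fun x => ⟨⟨f x.1.parts, ?_, ?_⟩, ?_⟩, fun y => ⟨⟨g y.1.parts, ?_, ?_⟩, ?_⟩, ?_, ?_⟩
  · -- positivity of f-image
    intro i hi
    obtain ⟨hStr, _, _⟩ := fA x.1.parts (hcount0 x.1) x.2
    have hc : 0 < (f x.1.parts).count i := Multiset.count_pos.2 hi
    have h0 := hStr.2.2.2
    rcases eq_or_ne i 0 with rfl | hi0
    · omega
    · omega
  · obtain ⟨_, hsum, _⟩ := fA x.1.parts (hcount0 x.1) x.2
    rw [hsum, x.1.parts_sum]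
  · -- A-conditions
    obtain ⟨hStr, _, _⟩ := fA x.1.parts (hcount0 x.1) x.2
    exact StrA_IsA hStr
  · -- positivity of g-image
    intro i hi
    have hStr := IsA_StrA (hcount0 y.1) y.2.1 y.2.2.1 y.2.2.2
    obtain ⟨_, h0, _, _⟩ := gG y.1.parts _ hStr
    have hc : 0 < (g y.1.parts).count i := Multiset.count_pos.2 hi
    rcases eq_or_ne i 0 with rfl | hi0
    · omega
    · omega
  · have hStr := IsA_StrA (hcount0 y.1) y.2.1 y.2.2.1 y.2.2.2
    obtain ⟨_, _, hsum, _⟩ := gG y.1.parts _ hStr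
    rw [hsum, y.1.parts_sum]
  · -- G-conditions
    have hStr := IsA_StrA (hcount0 y.1) y.2.1 y.2.2.1 y.2.2.2
    obtain ⟨hG, _, _, _⟩ := gG y.1.parts _ hStr
    exact hG
  · -- left inverse
    intro x
    apply Subtype.ext
    apply Nat.Partition.ext
    exact gf x.1.parts (hcount0 x.1) x.2
  · -- right inverse
    intro y
    apply Subtype.ext
    apply Nat.Partition.ext
    have hStr := IsA_StrA (hcount0 y.1) y.2.1 y.2.2.1 y.2.2.2
    exact fg y.1.parts _ hStr
end

section
/- Let q be a complex number with |q| < 1, and for each complex number a define F_1(a) := ∑_{n=0}^∞ a^(2n) q^(2n(n+1)) (q; q^2)_n (−a q^(2n+2); q)_∞ / ((q^2; q^2)_n) and F_3(a) := ∑_{n=0}^∞ a^(2n) q^(2n^2) (q; q^2)_n (−a q^(2n+1); q)_∞ / ((q^2; q^2)_n). Then for every complex a, F_3(a) = F_1(a) + a q (1 + a q) F_1(a q). -/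
/-- The finite q-Pochhammer symbol `(a; q)_n = ∏_{h=0}^{n-1} (1 - a q^h)`. -/
noncomputable def qPoch (a q : ℂ) (n : ℕ) : ℂ := ∏ h ∈ Finset.range n, (1 - a * q ^ h)

/-- The infinite q-Pochhammer symbol `(a; q)_∞ = ∏_{h=0}^{∞} (1 - a q^h)`. -/
noncomputable def qPochInf (a q : ℂ) : ℂ := ∏' h : ℕ, (1 - a * q ^ h)

/-- `F₁(a) = ∑_{n≥0} a^{2n} q^{2n(n+1)} (q;q²)_n (-a q^{2n+2};q)_∞ / (q²;q²)_n`. -/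
noncomputable def F₁ (q a : ℂ) : ℂ :=
  ∑' n : ℕ, a ^ (2 * n) * q ^ (2 * n * (n + 1)) * qPoch q (q ^ 2) n *
      qPochInf (-(a * q ^ (2 * n + 2))) q / qPoch (q ^ 2) (q ^ 2) n

/-- `F₃(a) = ∑_{n≥0} a^{2n} q^{2n²} (q;q²)_n (-a q^{2n+1};q)_∞ / (q²;q²)_n`. -/
noncomputable def F₃ (q a : ℂ) : ℂ :=
  ∑' n : ℕ, a ^ (2 * n) * q ^ (2 * n ^ 2) * qPoch q (q ^ 2) n *
      qPochInf (-(a * q ^ (2 * n + 1))) q / qPoch (q ^ 2) (q ^ 2) n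

/-! ### Auxiliary lemmas -/

lemma hasProd_zero_of_zero {f : ℕ → ℂ} (k : ℕ) (hk : f k = 0) : HasProd f 0 := by
  have h : ∀ᶠ s : Finset ℕ in Filter.atTop,
      (fun _ => (0:ℂ)) s = (fun s : Finset ℕ => ∏ i ∈ s, f i) s := by
    filter_upwards [Filter.eventually_ge_atTop ({k} : Finset ℕ)] with s hs
    exact (Finset.prod_eq_zero (by simpa using hs) hk).symm
  exact (Filter.Tendsto.congr' h tendsto_const_nhds)

lemma multipliable_qfac {q : ℂ} (hq : ‖q‖ < 1) (b : ℂ) :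
    Multipliable (fun h : ℕ => 1 - b * q ^ h) := by
  by_cases hz : ∀ k : ℕ, 1 - b * q ^ k ≠ 0
  · have hlog : Summable fun n : ℕ => Complex.log (1 - b * q ^ n) := by
      have hten : Filter.Tendsto (fun n : ℕ => ‖b‖ * ‖q‖ ^ n) Filter.atTop (nhds 0) := by
        simpa using (tendsto_pow_atTop_nhds_zero_of_lt_one (norm_nonneg q) hq).const_mul ‖b‖
      have hev : ∀ᶠ n : ℕ in Filter.atTop,
          ‖Complex.log (1 - b * q ^ n)‖ ≤ (3/2) * (‖b‖ * ‖q‖ ^ n) := by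
        filter_upwards [hten.eventually_le_const (by norm_num : (0:ℝ) < 1/2)] with n hn
        have h1 : ‖-(b * q ^ n)‖ ≤ 1/2 := by
          rw [norm_neg, norm_mul, norm_pow]; exact hn
        have := Complex.norm_log_one_add_half_le_self h1
        rw [show (1 : ℂ) + -(b * q ^ n) = 1 - b * q ^ n by ring] at this
        simpa [norm_mul, norm_pow] using this
      have hmaj : Summable fun n : ℕ => (3/2 : ℝ) * (‖b‖ * ‖q‖ ^ n) :=
        (((summable_geometric_of_lt_one (norm_nonneg q) hq).mul_left ‖b‖).mul_left (3/2))
      exact Summable.of_norm_bounded_eventually_nat hmaj hev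
    exact Complex.multipliable_of_summable_log hlog
  · push_neg at hz
    obtain ⟨k, hk⟩ := hz
    exact ⟨0, hasProd_zero_of_zero k hk⟩

lemma qPochInf_peel {q : ℂ} (hq : ‖q‖ < 1) (b : ℂ) :
    qPochInf b q = (1 - b) * qPochInf (b * q) q := by
  have hm1 : Multipliable (fun n : ℕ => 1 - b * q ^ (n + 1)) :=
    (multipliable_qfac hq (b * q)).congr (fun n => by ring)
  have h0 := tprod_eq_zero_mul' (f := fun h : ℕ => 1 - b * q ^ h) hm1
  rw [qPochInf, h0]
  congr 1
  · simp
  · rw [qPochInf]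
    exact tprod_congr fun h => by ring

lemma qPochInf_step {q : ℂ} (hq : ‖q‖ < 1) (c : ℂ) (m : ℕ) :
    qPochInf (-(c * q ^ m)) q = (1 + c * q ^ m) * qPochInf (-(c * q ^ (m + 1))) q := by
  have h := qPochInf_peel hq (-(c * q ^ m))
  rw [h]
  congr 1
  · ring
  · congr 1; ring

lemma qPochInf_norm_le {q : ℂ} (hq : ‖q‖ < 1) (b : ℂ) :
    ‖qPochInf b q‖ ≤ Real.exp (‖b‖ * (1 - ‖q‖)⁻¹) := by
  have hm := (multipliable_qfac hq b).hasProd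
  have ht : Filter.Tendsto (fun s : Finset ℕ => ∏ h ∈ s, ‖1 - b * q ^ h‖)
      Filter.atTop (nhds ‖qPochInf b q‖) := by
    have h2 : HasProd (fun h : ℕ => ‖1 - b * q ^ h‖) ‖qPochInf b q‖ := by
      rw [qPochInf]; exact hm.norm
    exact h2
  refine le_of_tendsto ht (Filter.Eventually.of_forall fun s => ?_)
  calc ∏ h ∈ s, ‖1 - b * q ^ h‖
      ≤ ∏ h ∈ s, Real.exp (‖b‖ * ‖q‖ ^ h) := by
        refine Finset.prod_le_prod (fun h _ => norm_nonneg _) (fun h _ => ?_)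
        calc ‖1 - b * q ^ h‖ ≤ ‖(1:ℂ)‖ + ‖b * q ^ h‖ := norm_sub_le _ _
          _ = 1 + ‖b * q ^ h‖ := by rw [norm_one]
          _ ≤ Real.exp ‖b * q ^ h‖ := by
              simpa [add_comm] using Real.add_one_le_exp ‖b * q ^ h‖
          _ = Real.exp (‖b‖ * ‖q‖ ^ h) := by rw [norm_mul, norm_pow]
    _ = Real.exp (∑ h ∈ s, ‖b‖ * ‖q‖ ^ h) := (Real.exp_sum _ _).symm
    _ ≤ Real.exp (‖b‖ * (1 - ‖q‖)⁻¹) := by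
        apply Real.exp_le_exp.2
        rw [← Finset.mul_sum]
        have h1 : ∑ h ∈ s, ‖q‖ ^ h ≤ (1 - ‖q‖)⁻¹ := by
          rw [← tsum_geometric_of_lt_one (norm_nonneg q) hq]
          exact Summable.sum_le_tsum s (fun i _ => pow_nonneg (norm_nonneg q) i)
            (summable_geometric_of_lt_one (norm_nonneg q) hq)
        exact mul_le_mul_of_nonneg_left h1 (norm_nonneg b)

lemma pinf_bound {q : ℂ} (hq : ‖q‖ < 1) (c : ℂ) (m : ℕ) :
    ‖qPochInf (-(c * q ^ m)) q‖ ≤ Real.exp (‖c‖ * (1 - ‖q‖)⁻¹) := by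
  refine le_trans (qPochInf_norm_le hq _) (Real.exp_le_exp.2 ?_)
  have h1 : ‖-(c * q ^ m)‖ ≤ ‖c‖ := by
    rw [norm_neg, norm_mul, norm_pow]
    calc ‖c‖ * ‖q‖ ^ m ≤ ‖c‖ * 1 :=
      mul_le_mul_of_nonneg_left (pow_le_one₀ (norm_nonneg q) hq.le) (norm_nonneg c)
      _ = ‖c‖ := mul_one _
  exact mul_le_mul_of_nonneg_right h1 (inv_nonneg.2 (by linarith))

lemma qPoch_q_norm_le {q : ℂ} (hq : ‖q‖ < 1) (n : ℕ) :
    ‖qPoch q (q ^ 2) n‖ ≤ Real.exp ((1 - ‖q‖)⁻¹) := by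
  rw [qPoch]
  rw [norm_prod]
  calc ∏ h ∈ Finset.range n, ‖1 - q * (q ^ 2) ^ h‖
      ≤ ∏ h ∈ Finset.range n, Real.exp (‖q‖ ^ h) := by
        refine Finset.prod_le_prod (fun h _ => norm_nonneg _) (fun h _ => ?_)
        calc ‖1 - q * (q ^ 2) ^ h‖ ≤ ‖(1:ℂ)‖ + ‖q * (q ^ 2) ^ h‖ := norm_sub_le _ _
          _ = 1 + ‖q * (q ^ 2) ^ h‖ := by rw [norm_one]
          _ ≤ 1 + ‖q‖ ^ h := by
              gcongr
              have : ‖q * (q ^ 2) ^ h‖ = ‖q‖ ^ (2 * h + 1) := by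
                rw [norm_mul, norm_pow, norm_pow]; ring
              rw [this]
              exact pow_le_pow_of_le_one (norm_nonneg q) hq.le (by omega)
          _ ≤ Real.exp (‖q‖ ^ h) := by
              simpa [add_comm] using Real.add_one_le_exp (‖q‖ ^ h)
    _ = Real.exp (∑ h ∈ Finset.range n, ‖q‖ ^ h) := (Real.exp_sum _ _).symm
    _ ≤ Real.exp ((1 - ‖q‖)⁻¹) := by
        apply Real.exp_le_exp.2
        rw [← tsum_geometric_of_lt_one (norm_nonneg q) hq]
        exact Summable.sum_le_tsum _ (fun i _ => pow_nonneg (norm_nonneg q) i)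
          (summable_geometric_of_lt_one (norm_nonneg q) hq)

lemma qPoch_qq_lower {q : ℂ} (hq : ‖q‖ < 1) (n : ℕ) :
    (1 - ‖q‖ ^ 2) ^ n ≤ ‖qPoch (q ^ 2) (q ^ 2) n‖ := by
  rw [qPoch]
  have hnorm : ‖∏ h ∈ Finset.range n, (1 - q ^ 2 * (q ^ 2) ^ h)‖
      = ∏ h ∈ Finset.range n, ‖1 - q ^ 2 * (q ^ 2) ^ h‖ := by
    exact norm_prod _ _
  rw [hnorm]
  have : (1 - ‖q‖ ^ 2) ^ n = ∏ _h ∈ Finset.range n, (1 - ‖q‖ ^ 2) := by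
    rw [Finset.prod_const, Finset.card_range]
  rw [this]
  refine Finset.prod_le_prod (fun h _ => by nlinarith [norm_nonneg q, sq_nonneg ‖q‖]) ?_
  intro h _
  have h1 : ‖q ^ 2 * (q ^ 2) ^ h‖ ≤ ‖q‖ ^ 2 := by
    rw [norm_mul, norm_pow, norm_pow]
    calc ‖q‖ ^ 2 * ‖q ^ 2‖ ^ h ≤ ‖q‖ ^ 2 * 1 := by
          refine mul_le_mul_of_nonneg_left (pow_le_one₀ (norm_nonneg _) ?_) (by positivity)
          rw [norm_pow]; exact pow_le_one₀ (norm_nonneg q) hq.le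
      _ = ‖q‖ ^ 2 := mul_one _
  calc 1 - ‖q‖ ^ 2 ≤ 1 - ‖q ^ 2 * (q ^ 2) ^ h‖ := by linarith
    _ = ‖(1 : ℂ)‖ - ‖q ^ 2 * (q ^ 2) ^ h‖ := by rw [norm_one]
    _ ≤ ‖1 - q ^ 2 * (q ^ 2) ^ h‖ := norm_sub_norm_le _ _

lemma one_sub_pow_ne_zero {q : ℂ} (hq : ‖q‖ < 1) (m : ℕ) (hm : 0 < m) :
    1 - q ^ m ≠ 0 := by
  intro h
  have h1 : q ^ m = 1 := by linear_combination -h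
  have h2 : ‖q ^ m‖ < 1 := by
    rw [norm_pow]
    calc ‖q‖ ^ m ≤ ‖q‖ ^ 1 := pow_le_pow_of_le_one (norm_nonneg q) hq.le hm
      _ < 1 := by simpa using hq
  rw [h1, norm_one] at h2
  exact lt_irrefl _ h2

lemma qPoch_qq_ne_zero {q : ℂ} (hq : ‖q‖ < 1) (n : ℕ) :
    qPoch (q ^ 2) (q ^ 2) n ≠ 0 := by
  rw [qPoch]
  refine Finset.prod_ne_zero_iff.2 fun h _ => ?_
  have : 1 - q ^ 2 * (q ^ 2) ^ h = 1 - q ^ (2 * h + 2) := by ring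
  rw [this]
  exact one_sub_pow_ne_zero hq _ (by omega)

lemma qPoch_succ (a q : ℂ) (n : ℕ) :
    qPoch a q (n + 1) = qPoch a q n * (1 - a * q ^ n) := Finset.prod_range_succ _ _

/-- The telescoping sequence. -/
noncomputable def Xseq (q a : ℂ) (n : ℕ) : ℂ :=
  a ^ (2 * n) * q ^ (2 * n ^ 2) * (1 - q ^ (2 * n)) * (1 + a * q ^ (2 * n + 1)) *
    qPoch q (q ^ 2) n * qPochInf (-(a * q ^ (2 * n + 2))) q / qPoch (q ^ 2) (q ^ 2) n

lemma termwise {q : ℂ} (hq : ‖q‖ < 1) (a : ℂ) (n : ℕ) :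
    a ^ (2 * n) * q ^ (2 * n ^ 2) * qPoch q (q ^ 2) n *
        qPochInf (-(a * q ^ (2 * n + 1))) q / qPoch (q ^ 2) (q ^ 2) n
    = a ^ (2 * n) * q ^ (2 * n * (n + 1)) * qPoch q (q ^ 2) n *
        qPochInf (-(a * q ^ (2 * n + 2))) q / qPoch (q ^ 2) (q ^ 2) n
      + (a * q * (1 + a * q)) *
        ((a * q) ^ (2 * n) * q ^ (2 * n * (n + 1)) * qPoch q (q ^ 2) n *
          qPochInf (-(a * q * q ^ (2 * n + 2))) q / qPoch (q ^ 2) (q ^ 2) n)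
      + (Xseq q a n - Xseq q a (n + 1)) := by
  rw [Xseq, Xseq]
  have e1 : 2 * (n + 1) + 2 = 2 * n + 4 := by ring
  have e2 : 2 * n + 1 + 1 = 2 * n + 2 := by ring
  have e3 : 2 * n + 2 + 1 = 2 * n + 3 := by ring
  have e4 : 2 * n + 3 + 1 = 2 * n + 4 := by ring
  have harg : -(a * q * q ^ (2 * n + 2)) = -(a * q ^ (2 * n + 3)) := by ring
  rw [harg, e1, qPochInf_step hq a (2 * n + 1), e2, qPochInf_step hq a (2 * n + 2), e3,
    qPochInf_step hq a (2 * n + 3), e4, qPoch_succ, qPoch_succ]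
  have hB := qPoch_qq_ne_zero hq n
  have h2 : 1 - q ^ 2 * (q ^ 2) ^ n ≠ 0 := by
    have : 1 - q ^ 2 * (q ^ 2) ^ n = 1 - q ^ (2 * n + 2) := by ring
    rw [this]; exact one_sub_pow_ne_zero hq _ (by omega)
  field_simp
  ring

lemma summable_majorant {q : ℂ} (hq : ‖q‖ < 1) (K A : ℝ) (hA : 0 ≤ A) :
    Summable (fun n : ℕ => K * A ^ n * ‖q‖ ^ (2 * n ^ 2)) := by
  by_cases hq0 : q = 0
  · rw [← summable_nat_add_iff 1]
    have : (fun n : ℕ => K * A ^ (n + 1) * ‖q‖ ^ (2 * (n + 1) ^ 2)) = fun _ => 0 := by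
      funext n
      rw [hq0]
      simp [zero_pow (show 2 * (n + 1) ^ 2 ≠ 0 by positivity)]
    rw [this]
    exact summable_zero
  · have hρ : 0 < ‖q‖ := norm_pos_iff.2 hq0
    apply summable_of_ratio_norm_eventually_le (r := 1 / 2) (by norm_num)
    have hten : Filter.Tendsto (fun n : ℕ => A * ‖q‖ ^ 2 * (‖q‖ ^ 4) ^ n)
        Filter.atTop (nhds 0) := by
      have h4 : ‖q‖ ^ 4 < 1 := pow_lt_one₀ (norm_nonneg q) hq (by norm_num)
      simpa using (tendsto_pow_atTop_nhds_zero_of_lt_one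
        (by positivity) h4).const_mul (A * ‖q‖ ^ 2)
    filter_upwards [hten.eventually_le_const (by norm_num : (0:ℝ) < 1/2)] with n hn
    have key : K * A ^ (n + 1) * ‖q‖ ^ (2 * (n + 1) ^ 2)
        = (K * A ^ n * ‖q‖ ^ (2 * n ^ 2)) * (A * ‖q‖ ^ 2 * (‖q‖ ^ 4) ^ n) := by ring
    rw [Real.norm_eq_abs, Real.norm_eq_abs, key, abs_mul]
    have h1 : |A * ‖q‖ ^ 2 * (‖q‖ ^ 4) ^ n| ≤ 1 / 2 := by
      rw [abs_of_nonneg (by positivity)]; exact hn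
    calc |K * A ^ n * ‖q‖ ^ (2 * n ^ 2)| * |A * ‖q‖ ^ 2 * (‖q‖ ^ 4) ^ n|
        ≤ |K * A ^ n * ‖q‖ ^ (2 * n ^ 2)| * (1 / 2) :=
          mul_le_mul_of_nonneg_left h1 (abs_nonneg _)
      _ = 1 / 2 * |K * A ^ n * ‖q‖ ^ (2 * n ^ 2)| := by ring

lemma core_bound {q : ℂ} (hq : ‖q‖ < 1) (a : ℂ) (n : ℕ) (u w : ℂ)
    (hu : ‖u‖ ≤ 2 * (1 + ‖a‖) * (‖a‖ ^ (2 * n) * ‖q‖ ^ (2 * n ^ 2)))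
    (hw : ‖w‖ ≤ Real.exp (‖a‖ * (1 - ‖q‖)⁻¹)) :
    ‖u * qPoch q (q ^ 2) n * w / qPoch (q ^ 2) (q ^ 2) n‖ ≤
      (2 * (1 + ‖a‖) * Real.exp ((1 - ‖q‖)⁻¹) * Real.exp (‖a‖ * (1 - ‖q‖)⁻¹)) *
        (‖a‖ ^ 2 * (1 - ‖q‖ ^ 2)⁻¹) ^ n * ‖q‖ ^ (2 * n ^ 2) := by
  have hq2 : 0 < 1 - ‖q‖ ^ 2 := by nlinarith [norm_nonneg q]
  have hBpos : 0 < (1 - ‖q‖ ^ 2) ^ n := pow_pos hq2 n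
  have hB := qPoch_qq_lower hq n
  rw [norm_div, norm_mul, norm_mul]
  calc ‖u‖ * ‖qPoch q (q ^ 2) n‖ * ‖w‖ / ‖qPoch (q ^ 2) (q ^ 2) n‖
      ≤ 2 * (1 + ‖a‖) * (‖a‖ ^ (2 * n) * ‖q‖ ^ (2 * n ^ 2)) * Real.exp ((1 - ‖q‖)⁻¹) *
          Real.exp (‖a‖ * (1 - ‖q‖)⁻¹) / (1 - ‖q‖ ^ 2) ^ n := by
        gcongr
        exact qPoch_q_norm_le hq n
    _ = (2 * (1 + ‖a‖) * Real.exp ((1 - ‖q‖)⁻¹) * Real.exp (‖a‖ * (1 - ‖q‖)⁻¹)) *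
          (‖a‖ ^ 2 * (1 - ‖q‖ ^ 2)⁻¹) ^ n * ‖q‖ ^ (2 * n ^ 2) := by
        rw [div_eq_mul_inv, ← inv_pow]
        ring

/-- The key q-difference equation `F₃(a) = F₁(a) + aq(1+aq) F₁(aq)`. -/
theorem F_qdifference (q : ℂ) (hq : ‖q‖ < 1) (a : ℂ) :
    F₃ q a = F₁ q a + a * q * (1 + a * q) * F₁ q (a * q) := by
  have hfac : (1:ℝ) ≤ 2 * (1 + ‖a‖) := by nlinarith [norm_nonneg a]
  have hA : (0:ℝ) ≤ ‖a‖ ^ 2 * (1 - ‖q‖ ^ 2)⁻¹ :=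
    mul_nonneg (by positivity) (inv_nonneg.2 (by nlinarith [norm_nonneg q]))
  have hmaj := summable_majorant hq
      (2 * (1 + ‖a‖) * Real.exp ((1 - ‖q‖)⁻¹) * Real.exp (‖a‖ * (1 - ‖q‖)⁻¹))
      (‖a‖ ^ 2 * (1 - ‖q‖ ^ 2)⁻¹) hA
  have hq1 : ‖q‖ ≤ 1 := hq.le
  -- summability of the F₃ summands
  have hs₃ : Summable (fun n : ℕ => a ^ (2 * n) * q ^ (2 * n ^ 2) * qPoch q (q ^ 2) n *
      qPochInf (-(a * q ^ (2 * n + 1))) q / qPoch (q ^ 2) (q ^ 2) n) := by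
    refine hmaj.of_norm_bounded fun n => core_bound hq a n _ _ ?_ (pinf_bound hq a _)
    rw [norm_mul, norm_pow, norm_pow]
    exact le_mul_of_one_le_left (by positivity) hfac
  -- summability of the F₁ a summands
  have hs₁ : Summable (fun n : ℕ => a ^ (2 * n) * q ^ (2 * n * (n + 1)) * qPoch q (q ^ 2) n *
      qPochInf (-(a * q ^ (2 * n + 2))) q / qPoch (q ^ 2) (q ^ 2) n) := by
    refine hmaj.of_norm_bounded fun n => core_bound hq a n _ _ ?_ (pinf_bound hq a _)
    rw [norm_mul, norm_pow, norm_pow]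
    have hmn : 2 * n ^ 2 ≤ 2 * n * (n + 1) := by nlinarith
    calc ‖a‖ ^ (2 * n) * ‖q‖ ^ (2 * n * (n + 1)) ≤ ‖a‖ ^ (2 * n) * ‖q‖ ^ (2 * n ^ 2) :=
          mul_le_mul_of_nonneg_left
            (pow_le_pow_of_le_one (norm_nonneg q) hq1 hmn) (by positivity)
      _ ≤ 2 * (1 + ‖a‖) * (‖a‖ ^ (2 * n) * ‖q‖ ^ (2 * n ^ 2)) :=
          le_mul_of_one_le_left (by positivity) hfac
  -- summability of the F₁ (a*q) summands
  have hs₂ : Summable (fun n : ℕ => (a * q) ^ (2 * n) * q ^ (2 * n * (n + 1)) *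
      qPoch q (q ^ 2) n * qPochInf (-(a * q * q ^ (2 * n + 2))) q / qPoch (q ^ 2) (q ^ 2) n) := by
    refine hmaj.of_norm_bounded fun n => core_bound hq a n _ _ ?_ ?_
    · rw [norm_mul, norm_pow, norm_pow]
      have haq : ‖a * q‖ ≤ ‖a‖ := by
        rw [norm_mul]
        calc ‖a‖ * ‖q‖ ≤ ‖a‖ * 1 := mul_le_mul_of_nonneg_left hq1 (norm_nonneg a)
          _ = ‖a‖ := mul_one _
      have hmn : 2 * n ^ 2 ≤ 2 * n * (n + 1) := by nlinarith
      calc ‖a * q‖ ^ (2 * n) * ‖q‖ ^ (2 * n * (n + 1))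
          ≤ ‖a‖ ^ (2 * n) * ‖q‖ ^ (2 * n ^ 2) :=
            mul_le_mul (pow_le_pow_left₀ (norm_nonneg _) haq _)
              (pow_le_pow_of_le_one (norm_nonneg q) hq1 hmn) (by positivity) (by positivity)
        _ ≤ 2 * (1 + ‖a‖) * (‖a‖ ^ (2 * n) * ‖q‖ ^ (2 * n ^ 2)) :=
            le_mul_of_one_le_left (by positivity) hfac
    · refine le_trans (pinf_bound hq (a * q) _) (Real.exp_le_exp.2 ?_)
      have haq : ‖a * q‖ ≤ ‖a‖ := by
        rw [norm_mul]
        calc ‖a‖ * ‖q‖ ≤ ‖a‖ * 1 := mul_le_mul_of_nonneg_left hq1 (norm_nonneg a)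
          _ = ‖a‖ := mul_one _
      exact mul_le_mul_of_nonneg_right haq (inv_nonneg.2 (by linarith))
  -- summability of the telescoping sequence
  have hsX : Summable (fun n : ℕ => Xseq q a n) := by
    refine hmaj.of_norm_bounded fun n => ?_
    rw [Xseq]
    refine core_bound hq a n _ _ ?_ (pinf_bound hq a _)
    rw [norm_mul, norm_mul, norm_mul, norm_pow, norm_pow]
    have h1 : ‖1 - q ^ (2 * n)‖ ≤ 2 := by
      calc ‖1 - q ^ (2 * n)‖ ≤ ‖(1:ℂ)‖ + ‖q ^ (2 * n)‖ := norm_sub_le _ _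
        _ = 1 + ‖q‖ ^ (2 * n) := by rw [norm_one, norm_pow]
        _ ≤ 1 + 1 := by
            gcongr
            exact pow_le_one₀ (norm_nonneg q) hq1
        _ = 2 := by norm_num
    have h2 : ‖1 + a * q ^ (2 * n + 1)‖ ≤ 1 + ‖a‖ := by
      calc ‖1 + a * q ^ (2 * n + 1)‖ ≤ ‖(1:ℂ)‖ + ‖a * q ^ (2 * n + 1)‖ := norm_add_le _ _
        _ = 1 + ‖a‖ * ‖q‖ ^ (2 * n + 1) := by rw [norm_one, norm_mul, norm_pow]
        _ ≤ 1 + ‖a‖ * 1 := by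
            gcongr
            exact pow_le_one₀ (norm_nonneg q) hq1
        _ = 1 + ‖a‖ := by rw [mul_one]
    calc ‖a‖ ^ (2 * n) * ‖q‖ ^ (2 * n ^ 2) * ‖1 - q ^ (2 * n)‖ * ‖1 + a * q ^ (2 * n + 1)‖
        ≤ ‖a‖ ^ (2 * n) * ‖q‖ ^ (2 * n ^ 2) * 2 * (1 + ‖a‖) := by
          gcongr <;> positivity
      _ = 2 * (1 + ‖a‖) * (‖a‖ ^ (2 * n) * ‖q‖ ^ (2 * n ^ 2)) := by ring
  -- telescoping
  have hX1 : Summable (fun n : ℕ => Xseq q a (n + 1)) := (summable_nat_add_iff 1).2 hsX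
  have hdiff : Summable (fun n : ℕ => Xseq q a n - Xseq q a (n + 1)) := hsX.sub hX1
  have hX0 : Xseq q a 0 = 0 := by simp [Xseq]
  have htel : ∑' n : ℕ, (Xseq q a n - Xseq q a (n + 1)) = 0 := by
    rw [hsX.tsum_sub hX1, hsX.tsum_eq_zero_add, hX0, zero_add, sub_self]
  -- assembly
  rw [F₃, F₁, F₁, ← tsum_mul_left, ← hs₁.tsum_add (hs₂.mul_left (a * q * (1 + a * q)))]
  have key : (∑' n : ℕ, a ^ (2 * n) * q ^ (2 * n ^ 2) * qPoch q (q ^ 2) n *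
        qPochInf (-(a * q ^ (2 * n + 1))) q / qPoch (q ^ 2) (q ^ 2) n)
      = ∑' n : ℕ, ((a ^ (2 * n) * q ^ (2 * n * (n + 1)) * qPoch q (q ^ 2) n *
            qPochInf (-(a * q ^ (2 * n + 2))) q / qPoch (q ^ 2) (q ^ 2) n
          + (a * q * (1 + a * q)) *
            ((a * q) ^ (2 * n) * q ^ (2 * n * (n + 1)) * qPoch q (q ^ 2) n *
              qPochInf (-(a * q * q ^ (2 * n + 2))) q / qPoch (q ^ 2) (q ^ 2) n))
          + (Xseq q a n - Xseq q a (n + 1))) := tsum_congr fun n => termwise hq a n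
  rw [key, (hs₁.add (hs₂.mul_left (a * q * (1 + a * q)))).tsum_add hdiff, htel, add_zero]
end

section
/- Let q be a complex number with |q| < 1, and for each complex number a define E_1(a) := ∑_{n=0}^∞ (a^(2n) q^(2n(n+1)) / (q^2; q^2)_n) · ∑_{m=0}^∞ a^m q^(m(m+2n+1)) / (q; q)_m and E_3(a) := ∑_{n=0}^∞ (a^(2n) q^(2n^2) / (q^2; q^2)_n) · ∑_{m=0}^∞ a^m q^(m(m+2n)) / (q; q)_m. Then for every complex a, E_3(a) = E_1(a) + a q (1 + a q) E_1(a q). -/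
/-- `E₁(a) = ∑_{n≥0} (a^{2n} q^{2n(n+1)} / (q²;q²)_n) ∑_{m≥0} a^m q^{m(m+2n+1)} / (q;q)_m`. -/
noncomputable def E₁ (q a : ℂ) : ℂ :=
  ∑' n : ℕ, (a ^ (2 * n) * q ^ (2 * n * (n + 1)) / qPoch (q ^ 2) (q ^ 2) n) *
      ∑' m : ℕ, a ^ m * q ^ (m * (m + 2 * n + 1)) / qPoch q q m

/-- `E₃(a) = ∑_{n≥0} (a^{2n} q^{2n²} / (q²;q²)_n) ∑_{m≥0} a^m q^{m(m+2n)} / (q;q)_m`. -/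
noncomputable def E₃ (q a : ℂ) : ℂ :=
  ∑' n : ℕ, (a ^ (2 * n) * q ^ (2 * n ^ 2) / qPoch (q ^ 2) (q ^ 2) n) *
      ∑' m : ℕ, a ^ m * q ^ (m * (m + 2 * n)) / qPoch q q m

open Filter Finset

lemma one_sub_ne {x : ℂ} (hx : ‖x‖ < 1) : 1 - x ≠ 0 := by
  intro h
  rw [sub_eq_zero] at h
  rw [← h] at hx
  simp at hx

lemma norm_q_mul_pow_lt {q : ℂ} (hq : ‖q‖ < 1) (h : ℕ) : ‖q * q ^ h‖ < 1 := by
  rw [norm_mul, norm_pow, ← pow_succ']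
  exact pow_lt_one₀ (norm_nonneg q) hq (Nat.succ_ne_zero h)

lemma qPoch_self_ne_zero {q : ℂ} (hq : ‖q‖ < 1) (n : ℕ) : qPoch q q n ≠ 0 := by
  unfold qPoch
  rw [Finset.prod_ne_zero_iff]
  exact fun h _ => one_sub_ne (norm_q_mul_pow_lt hq h)

noncomputable def Gterm (q x : ℂ) (m : ℕ) : ℂ := x ^ m * q ^ (m * m) / qPoch q q m

lemma Gterm_succ {q : ℂ} (hq : ‖q‖ < 1) (x : ℂ) (m : ℕ) :
    Gterm q x (m + 1) = Gterm q x m * (x * q ^ (2 * m + 1) / (1 - q * q ^ m)) := by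
  unfold Gterm qPoch
  rw [Finset.prod_range_succ]
  have h1 : (1 : ℂ) - q * q ^ m ≠ 0 := one_sub_ne (norm_q_mul_pow_lt hq m)
  have h2 : (∏ h ∈ Finset.range m, (1 - q * q ^ h)) ≠ 0 := qPoch_self_ne_zero hq m
  have h3 : (m + 1) * (m + 1) = m * m + (2 * m + 1) := by ring
  rw [h3, pow_add]
  field_simp
  ring

lemma norm_one_sub_ge {q : ℂ} (hq : ‖q‖ < 1) (m : ℕ) : 1 - ‖q‖ ≤ ‖1 - q * q ^ m‖ := by
  have h1 := norm_sub_norm_le (1 : ℂ) (q * q ^ m)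
  have hb : ‖q * q ^ m‖ ≤ ‖q‖ := by
    rw [norm_mul, norm_pow]
    calc ‖q‖ * ‖q‖ ^ m ≤ ‖q‖ * 1 :=
          mul_le_mul_of_nonneg_left (pow_le_one₀ (norm_nonneg q) hq.le) (norm_nonneg q)
      _ = ‖q‖ := mul_one _
  simp only [norm_one] at h1
  linarith

lemma summable_Gterm {q : ℂ} (hq : ‖q‖ < 1) (x : ℂ) : Summable (Gterm q x) := by
  apply summable_of_ratio_norm_eventually_le (r := 1/2) (by norm_num)
  have ht : Tendsto (fun m : ℕ => ‖x‖ * ‖q‖ ^ (2 * m + 1)) atTop (nhds 0) := by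
    have h0 : Tendsto (fun m : ℕ => ‖q‖ ^ m) atTop (nhds 0) :=
      tendsto_pow_atTop_nhds_zero_of_lt_one (norm_nonneg q) hq
    have h1 : Tendsto (fun m : ℕ => ‖x‖ * ‖q‖ ^ m) atTop (nhds 0) := by
      simpa using h0.const_mul ‖x‖
    apply squeeze_zero (fun m => by positivity) (g := fun m : ℕ => ‖x‖ * ‖q‖ ^ m) ?_ h1
    intro m
    apply mul_le_mul_of_nonneg_left _ (norm_nonneg x)
    exact pow_le_pow_of_le_one (norm_nonneg q) hq.le (by omega)
  have hpos : (0:ℝ) < (1/2) * (1 - ‖q‖) := by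
    have := norm_nonneg q; nlinarith
  have hev : ∀ᶠ m : ℕ in atTop, ‖x‖ * ‖q‖ ^ (2 * m + 1) < (1/2) * (1 - ‖q‖) :=
    ht.eventually (gt_mem_nhds hpos)
  filter_upwards [hev] with m hm
  rw [Gterm_succ hq, norm_mul, norm_div, norm_mul, norm_pow, mul_comm (1/2 : ℝ)]
  apply mul_le_mul_of_nonneg_left _ (norm_nonneg _)
  calc ‖x‖ * ‖q‖ ^ (2 * m + 1) / ‖1 - q * q ^ m‖
      ≤ ((1/2) * (1 - ‖q‖)) / (1 - ‖q‖) := by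
        apply div_le_div₀ hpos.le hm.le (by linarith) (norm_one_sub_ge hq m)
    _ = 1/2 := by
        rw [mul_div_assoc, div_self (by linarith), mul_one]

noncomputable def Gfun (q x : ℂ) : ℂ := ∑' m, Gterm q x m

lemma summable_norm_Gterm {q : ℂ} (hq : ‖q‖ < 1) (x : ℂ) :
    Summable (fun m => ‖Gterm q x m‖) :=
  summable_norm_iff.mpr (summable_Gterm hq x)

/-- the auxiliary sequence in the Rogers–Ramanujan recurrence -/
noncomputable def Hterm (q x : ℂ) (m : ℕ) : ℂ := x ^ m * q ^ (m * m) * (1 - q ^ m) / qPoch q q m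

lemma norm_Hterm_le {q x : ℂ} (hq : ‖q‖ < 1) (m : ℕ) :
    ‖Hterm q x m‖ ≤ 2 * ‖Gterm q x m‖ := by
  have : Hterm q x m = Gterm q x m * (1 - q ^ m) := by
    unfold Hterm Gterm; field_simp [qPoch_self_ne_zero hq m]
  rw [this, norm_mul, mul_comm]
  apply mul_le_mul_of_nonneg_right _ (norm_nonneg _)
  calc ‖1 - q ^ m‖ ≤ ‖(1:ℂ)‖ + ‖q ^ m‖ := norm_sub_le _ _
    _ ≤ 1 + 1 := by
        rw [norm_one, norm_pow]
        have := pow_le_one₀ (norm_nonneg q) hq.le (n := m)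
        linarith
    _ = 2 := by norm_num

lemma summable_Hterm {q : ℂ} (hq : ‖q‖ < 1) (x : ℂ) : Summable (Hterm q x) :=
  Summable.of_norm_bounded ((summable_norm_Gterm hq x).mul_left 2) (norm_Hterm_le hq)

lemma G_rec {q : ℂ} (hq : ‖q‖ < 1) (x : ℂ) :
    Gfun q x = Gfun q (x * q) + x * q * Gfun q (x * q ^ 2) := by
  have hsplit : ∀ m, Gterm q x m = Gterm q (x * q) m + Hterm q x m := by
    intro m
    unfold Gterm Hterm
    rw [mul_pow, ← add_div]
    congr 1
    ring
  have h1 : Gfun q x = (∑' m, Gterm q (x * q) m) + ∑' m, Hterm q x m := by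
    unfold Gfun
    rw [← Summable.tsum_add (summable_Gterm hq (x * q)) (summable_Hterm hq x)]
    exact tsum_congr hsplit
  rw [h1]
  congr 1
  -- ∑' Hterm = x q Gfun (x q²)
  have h0 : Hterm q x 0 = 0 := by unfold Hterm; simp
  rw [Summable.tsum_eq_zero_add (summable_Hterm hq x), h0, zero_add]
  have hshift : ∀ m : ℕ, Hterm q x (m + 1) = x * q * Gterm q (x * q ^ 2) m := by
    intro m
    have hP : qPoch q q (m + 1) = qPoch q q m * (1 - q * q ^ m) := Finset.prod_range_succ _ m
    have hne := one_sub_ne (norm_q_mul_pow_lt hq m)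
    have hne2 := qPoch_self_ne_zero hq m
    unfold Hterm Gterm
    have h3 : (m + 1) * (m + 1) = m * m + (2 * m + 1) := by ring
    rw [hP, h3, pow_add, pow_succ']
    field_simp
    ring
  rw [tsum_congr hshift, tsum_mul_left]
  rfl

lemma hq2 {q : ℂ} (hq : ‖q‖ < 1) : ‖q ^ 2‖ < 1 := by
  rw [norm_pow]
  exact pow_lt_one₀ (norm_nonneg q) hq two_ne_zero

lemma norm_qpow_le_one {q : ℂ} (hq : ‖q‖ < 1) (k : ℕ) : ‖q ^ k‖ ≤ 1 := by
  rw [norm_pow]; exact pow_le_one₀ (norm_nonneg q) hq.le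

/-- uniform bound for `Gfun q (a q^k)`. -/
lemma Gfun_bound {q : ℂ} (hq : ‖q‖ < 1) (a : ℂ) (k : ℕ) :
    ‖Gfun q (a * q ^ k)‖ ≤ ∑' m, ‖Gterm q a m‖ := by
  unfold Gfun
  refine le_trans (norm_tsum_le_tsum_norm (summable_norm_Gterm hq _)) ?_
  apply Summable.tsum_le_tsum _ (summable_norm_Gterm hq _) (summable_norm_Gterm hq a)
  intro m
  unfold Gterm
  rw [norm_div, norm_div]
  gcongr
  · have he : (a * q ^ k) ^ m * q ^ (m * m) = (a ^ m * q ^ (m * m)) * (q ^ k) ^ m := by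
      rw [mul_pow]; ring
    rw [he, norm_mul]
    refine mul_le_of_le_one_right (norm_nonneg _) ?_
    rw [norm_pow]
    exact pow_le_one₀ (norm_nonneg _) (norm_qpow_le_one hq k)

lemma summable_master {q a : ℂ} (hq : ‖q‖ < 1) (u : ℕ → ℂ) (C : ℝ) (hu : ∀ n, ‖u n‖ ≤ C) :
    Summable (fun n => Gterm (q ^ 2) (a ^ 2) n * u n) := by
  apply Summable.of_norm_bounded (g := fun n => ‖Gterm (q ^ 2) (a ^ 2) n‖ * C)
    ((summable_norm_Gterm (hq2 hq) _).mul_right C)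
  intro n
  rw [norm_mul]
  exact mul_le_mul_of_nonneg_left (hu n) (norm_nonneg _)

lemma E3_rep {q : ℂ} (hq : ‖q‖ < 1) (a : ℂ) :
    E₃ q a = ∑' n, Gterm (q ^ 2) (a ^ 2) n * Gfun q (a * q ^ (2 * n)) := by
  unfold E₃ Gfun
  apply tsum_congr
  intro n
  congr 1
  · unfold Gterm
    congr 1
    simp only [mul_pow, ← pow_mul, mul_assoc, ← pow_add]
    congr 1 <;> ring
  · apply tsum_congr
    intro m
    unfold Gterm
    congr 1
    simp only [mul_pow, ← pow_mul, mul_assoc, ← pow_add]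
    congr 1
    ring

lemma E1_rep {q : ℂ} (hq : ‖q‖ < 1) (a : ℂ) (j : ℕ) :
    E₁ q (a * q ^ j) = ∑' n, Gterm (q ^ 2) (a ^ 2) n *
      (q ^ ((2 * j + 2) * n) * Gfun q (a * q ^ (2 * n + j + 1))) := by
  unfold E₁ Gfun
  apply tsum_congr
  intro n
  rw [← mul_assoc]
  congr 1
  · unfold Gterm
    rw [div_mul_eq_mul_div]
    congr 1
    simp only [mul_pow, ← pow_mul, mul_assoc, ← pow_add]
    congr 1
    ring
  · apply tsum_congr
    intro m
    unfold Gterm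
    congr 1
    simp only [mul_pow, ← pow_mul, mul_assoc, ← pow_add]
    congr 1
    ring

lemma Pshift {q : ℂ} (hq : ‖q‖ < 1) (a : ℂ) (n : ℕ) :
    Gterm (q ^ 2) (a ^ 2) (n + 1) * (1 - q ^ (2 * n + 2)) =
      Gterm (q ^ 2) (a ^ 2) n * (a ^ 2 * q ^ (4 * n + 2)) := by
  have hC : (1 : ℂ) - q ^ 2 * (q ^ 2) ^ n ≠ 0 := one_sub_ne (norm_q_mul_pow_lt (hq2 hq) n)
  have h1 : (1 : ℂ) - q ^ (2 * n + 2) = 1 - q ^ 2 * (q ^ 2) ^ n := by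
    rw [show 2 * n + 2 = 2 + 2 * n from by ring, pow_add, pow_mul]
  rw [Gterm_succ (hq2 hq), h1, mul_assoc, div_mul_cancel₀ _ hC]
  congr 2
  rw [← pow_mul]
  congr 1
  ring

lemma Srec {q : ℂ} (hq : ‖q‖ < 1) (a : ℂ) (k : ℕ) :
    Gfun q (a * q ^ k) =
      Gfun q (a * q ^ (k + 1)) + a * q ^ (k + 1) * Gfun q (a * q ^ (k + 2)) := by
  have h := G_rec hq (a * q ^ k)
  have h1 : a * q ^ k * q = a * q ^ (k + 1) := by ring
  have h2 : a * q ^ k * q ^ 2 = a * q ^ (k + 2) := by ring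
  rw [h1, h2] at h
  exact h

theorem main_aux {q : ℂ} (hq : ‖q‖ < 1) (a : ℂ) :
    (∑' n, Gterm (q ^ 2) (a ^ 2) n * Gfun q (a * q ^ (2 * n)))
      = (∑' n, Gterm (q ^ 2) (a ^ 2) n * (q ^ (2 * n) * Gfun q (a * q ^ (2 * n + 1))))
        + a * q * (1 + a * q) *
          ∑' n, Gterm (q ^ 2) (a ^ 2) n * (q ^ (4 * n) * Gfun q (a * q ^ (2 * n + 2))) := by
  set P : ℕ → ℂ := Gterm (q ^ 2) (a ^ 2) with hPdef
  set S : ℕ → ℂ := fun k => Gfun q (a * q ^ k) with hSdef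
  have hbS : ∀ k : ℕ, ‖S k‖ ≤ ∑' m, ‖Gterm q a m‖ := by
    intro k; simp only [hSdef]; exact Gfun_bound hq a k
  have srec : ∀ k : ℕ, S k = S (k + 1) + a * q ^ (k + 1) * S (k + 2) := by
    intro k; simp only [hSdef]; exact Srec hq a k
  have pshift : ∀ n : ℕ, P (n + 1) * (1 - q ^ (2 * n + 2)) = P n * (a ^ 2 * q ^ (4 * n + 2)) := by
    intro n; simp only [hPdef]; exact Pshift hq a n
  have key : ∀ (c : ℕ → ℂ) (C : ℝ), (∀ n, ‖c n‖ ≤ C) → ∀ k : ℕ → ℕ,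
      Summable (fun n => P n * (c n * S (k n))) := by
    intro c C hC k
    simp only [hPdef, hSdef]
    apply summable_master hq _ (C * (∑' m, ‖Gterm q a m‖))
    intro n
    rw [norm_mul]
    apply mul_le_mul (hC n) (Gfun_bound hq a (k n)) (norm_nonneg _)
      (le_trans (norm_nonneg _) (hC 0))
  have hbc : ∀ (x : ℂ) (k : ℕ), ‖x * q ^ k‖ ≤ ‖x‖ := fun x k => by
    rw [norm_mul]
    exact mul_le_of_le_one_right (norm_nonneg x) (norm_qpow_le_one hq k)
  have hone : ∀ k : ℕ, ‖1 - q ^ k‖ ≤ 2 := by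
    intro k
    calc ‖1 - q ^ k‖ ≤ ‖(1 : ℂ)‖ + ‖q ^ k‖ := norm_sub_le _ _
      _ ≤ 2 := by rw [norm_one]; linarith [norm_qpow_le_one hq k]
  -- summability instances
  have sT1 : Summable (fun n => P n * (q ^ (2 * n) * S (2 * n + 1))) :=
    key _ 1 (fun n => norm_qpow_le_one hq _) _
  have sW : Summable (fun n => P n * ((1 - q ^ (2 * n)) * S (2 * n + 1))) :=
    key _ 2 (fun n => hone _) _
  have sV : Summable (fun n => P n * ((a * q ^ (2 * n + 1)) * S (2 * n + 2))) :=
    key _ ‖a‖ (fun n => hbc a _) _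
  have sT2 : Summable (fun n => P n * (q ^ (4 * n) * S (2 * n + 2))) :=
    key _ 1 (fun n => norm_qpow_le_one hq _) _
  have sY : Summable (fun n => P n * (((1 - q ^ (2 * n)) * q ^ (2 * n)) * S (2 * n + 2))) :=
    key _ 2 (fun n => le_trans (hbc _ _) (hone _)) _
  have sW2 : Summable (fun n => P n * ((a ^ 2 * q ^ (4 * n + 2)) * S (2 * n + 3))) :=
    key _ ‖a ^ 2‖ (fun n => hbc _ _) _
  have sZ : Summable (fun n => P n * ((a ^ 2 * q ^ (6 * n + 4)) * S (2 * n + 4))) :=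
    key _ ‖a ^ 2‖ (fun n => hbc _ _) _
  -- Step 1: split the left side
  have step1 : (∑' n, P n * S (2 * n))
      = (∑' n, P n * (q ^ (2 * n) * S (2 * n + 1)))
        + ((∑' n, P n * ((1 - q ^ (2 * n)) * S (2 * n + 1)))
          + ∑' n, P n * ((a * q ^ (2 * n + 1)) * S (2 * n + 2))) := by
    rw [← Summable.tsum_add sW sV, ← Summable.tsum_add sT1 (sW.add sV)]
    apply tsum_congr
    intro n
    rw [srec (2 * n)]
    rw [show 2 * n + 1 + 1 = 2 * n + 2 from by ring]
    ring
  -- V = aq*T2 + aq*Y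
  have hV : (∑' n, P n * ((a * q ^ (2 * n + 1)) * S (2 * n + 2)))
      = a * q * (∑' n, P n * (q ^ (4 * n) * S (2 * n + 2)))
        + a * q * ∑' n, P n * (((1 - q ^ (2 * n)) * q ^ (2 * n)) * S (2 * n + 2)) := by
    rw [← tsum_mul_left, ← tsum_mul_left, ← Summable.tsum_add (sT2.mul_left (a * q)) (sY.mul_left (a * q))]
    apply tsum_congr
    intro n
    ring
  -- W = W2 (index shift)
  have hW : (∑' n, P n * ((1 - q ^ (2 * n)) * S (2 * n + 1)))
      = ∑' n, P n * ((a ^ 2 * q ^ (4 * n + 2)) * S (2 * n + 3)) := by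
    rw [Summable.tsum_eq_zero_add sW]
    have h0 : P 0 * ((1 - q ^ (2 * 0)) * S (2 * 0 + 1)) = 0 := by norm_num
    rw [h0, zero_add]
    apply tsum_congr
    intro n
    rw [show 2 * (n + 1) = 2 * n + 2 from by ring, show 2 * n + 2 + 1 = 2 * n + 3 from by omega,
      ← mul_assoc, pshift n, mul_assoc]
  -- Y = Z (index shift)
  have hY : (∑' n, P n * (((1 - q ^ (2 * n)) * q ^ (2 * n)) * S (2 * n + 2)))
      = ∑' n, P n * ((a ^ 2 * q ^ (6 * n + 4)) * S (2 * n + 4)) := by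
    rw [Summable.tsum_eq_zero_add sY]
    have h0 : P 0 * (((1 - q ^ (2 * 0)) * q ^ (2 * 0)) * S (2 * 0 + 2)) = 0 := by norm_num
    rw [h0, zero_add]
    apply tsum_congr
    intro n
    rw [show 2 * (n + 1) = 2 * n + 2 from by ring, show 2 * n + 2 + 2 = 2 * n + 4 from by omega]
    rw [show P (n + 1) * (((1 - q ^ (2 * n + 2)) * q ^ (2 * n + 2)) * S (2 * n + 4))
        = (P (n + 1) * (1 - q ^ (2 * n + 2))) * (q ^ (2 * n + 2) * S (2 * n + 4)) from by ring,
      pshift n]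
    ring
  -- a²q² T2 = W2 + aq*Z
  have hF3 : a ^ 2 * q ^ 2 * (∑' n, P n * (q ^ (4 * n) * S (2 * n + 2)))
      = (∑' n, P n * ((a ^ 2 * q ^ (4 * n + 2)) * S (2 * n + 3)))
        + a * q * ∑' n, P n * ((a ^ 2 * q ^ (6 * n + 4)) * S (2 * n + 4)) := by
    rw [← tsum_mul_left, ← tsum_mul_left, ← Summable.tsum_add sW2 (sZ.mul_left (a * q))]
    apply tsum_congr
    intro n
    rw [srec (2 * n + 2)]
    rw [show 2 * n + 2 + 1 = 2 * n + 3 from by ring, show 2 * n + 2 + 2 = 2 * n + 4 from by ring]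
    ring
  rw [step1, hV, hW, hY]
  linear_combination -hF3

/-- The key q-difference equation `E₃(a) = E₁(a) + aq(1+aq) E₁(aq)`. -/
theorem E_qdifference (q : ℂ) (hq : ‖q‖ < 1) (a : ℂ) :
    E₃ q a = E₁ q a + a * q * (1 + a * q) * E₁ q (a * q) := by
  have e3 := E3_rep hq a
  have e1a := E1_rep hq a 0
  rw [pow_zero, mul_one] at e1a
  have e1b := E1_rep hq a 1
  rw [pow_one] at e1b
  rw [e3, e1a, e1b]
  simp only [show 2 * 0 + 2 = 2 from rfl, show 2 * 1 + 2 = 4 from rfl,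
    show ∀ n : ℕ, 2 * n + 0 + 1 = 2 * n + 1 from fun n => by omega,
    show ∀ n : ℕ, 2 * n + 1 + 1 = 2 * n + 2 from fun n => by omega]
  exact main_aux hq a
end
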